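/- arXiv:1207.0723 — 3 statements merged into one kernel-verified Lean document; each statement's English description precedes it below -/
import Mathlib

section
/- Fix an integer N ≥ 1, γ ∈ ℝ and λ ∈ ℂ^N with pairwise distinct coordinates. For μ ∈ ℂ^N with pairwise distinct coordinates set G^γ_μ := Π_{1 ≤ j < k ≤ N} (μ_j − μ_k − iγ)/(μ_j − μ_k), and define the Bethe wavefunction Ψ_λ : ℝ^N → ℂ by Ψ_λ(x) = (1/N!) Σ_{w ∈ S_N} G^γ_{wλ} exp(i Σ_{j=1}^N (wλ)_j (x↓)_j), where x↓ denotes the decreasing rearrangement of x and wλ is λ with coordinates permuted by w. Then Ψ_λ is a continuous S_N-invariant function, smooth on every alcove, which satisfies −Σ_{j=1}^N (∂_j² Ψ_λ)(x) = (Σ_{j=1}^N λ_j²) Ψ_λ(x) for every x ∈ ℝ^N_reg, and Ψ_λ satisfies the derivative jump conditions (with coupling γ). -/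
open scoped BigOperators
open MeasureTheory Complex

noncomputable section

abbrev Pt (N : ℕ) := Fin N → ℝ
abbrev Fn (N : ℕ) := Pt N → ℂ

/-- The permutation `w` acting on points: `(w • x) j = x (w⁻¹ j)`. -/
def permPt {N : ℕ} (w : Equiv.Perm (Fin N)) (x : Pt N) : Pt N := fun j => x (w⁻¹ j)

/-- The fundamental (positive) alcove `ℝ^N_+ = {x : x_1 > … > x_N}`. -/
def posAlcove (N : ℕ) : Set (Pt N) := {x | ∀ i j : Fin N, i < j → x j < x i}

/-- The alcove `w⁻¹ ℝ^N_+`. -/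
def alcove {N : ℕ} (w : Equiv.Perm (Fin N)) : Set (Pt N) := {x | permPt w x ∈ posAlcove N}

/-- Regular vectors: pairwise distinct coordinates. -/
def regPts (N : ℕ) : Set (Pt N) := {x | ∀ i j : Fin N, i ≠ j → x i ≠ x j}

/-- Partial derivative in the `j`-th coordinate. -/
def pd {N : ℕ} (j : Fin N) (f : Fn N) : Fn N :=
  fun x => deriv (fun t : ℝ => f (Function.update x j t)) (x j)

/-- The plane wave `e^{iλ}`. -/
def planeWave {N : ℕ} (lam : Fin N → ℂ) : Fn N :=
  fun x => Complex.exp (Complex.I * ∑ j, lam j * (x j : ℂ))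

/-- The integral operator `I_{jk}`:
`(I_{jk} f)(x) = ∫_0^{x_j-x_k} f(x - y(e_j - e_k)) dy`. -/
def Iop {N : ℕ} (j k : Fin N) (f : Fn N) : Fn N :=
  fun x => ∫ y in (0:ℝ)..(x j - x k),
    f (Function.update (Function.update x j (x j - y)) k (x k + y))

/-- The integral-reflection operator `s^γ` associated to the transposition `(j k)`. -/
def sIR {N : ℕ} (γ : ℝ) (j k : Fin N) (f : Fn N) : Fn N :=
  fun x => f (permPt (Equiv.swap j k) x) + (γ : ℂ) * Iop j k f x

/-- The integral-reflection operator for the simple transposition `s_j = (j, j+1)`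
(zero-based); identity for out-of-range `j`. -/
def sSimple {N : ℕ} (γ : ℝ) (j : ℕ) (f : Fn N) : Fn N :=
  if h : j + 1 < N then sIR γ ⟨j, Nat.lt_of_succ_lt h⟩ ⟨j + 1, h⟩ f else f

/-- `w^γ` computed from a word `L` of simple reflections:
`wordOp γ [i₁,…,i_l] f = s_{i₁}^γ (⋯ (s_{i_l}^γ f))`. -/
def wordOp {N : ℕ} (γ : ℝ) (L : List ℕ) (f : Fn N) : Fn N :=
  L.foldr (fun j g => sSimple γ j g) f

/-- The simple transposition `s_j` (zero-based); identity for out-of-range `j`. -/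
def simpleT (N : ℕ) (j : ℕ) : Equiv.Perm (Fin N) :=
  if h : j + 1 < N then Equiv.swap ⟨j, Nat.lt_of_succ_lt h⟩ ⟨j + 1, h⟩ else 1

/-- The permutation represented by a word of simple reflections. -/
def wordPerm (N : ℕ) (L : List ℕ) : Equiv.Perm (Fin N) := (L.map (simpleT N)).prod

/-- `P` is the propagation operator `P^γ_N`: for continuous `f`, `P f` is continuous and
on the alcove `w⁻¹ ℝ^N_+` it equals `(w^γ f)(w x)`, where `w^γ` may be computed from any
word of simple reflections representing `w` (the operators `s_j^γ` satisfy the relations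
of the symmetric group, so this does not depend on the word). -/
def IsPropagation {N : ℕ} (γ : ℝ) (P : Fn N → Fn N) : Prop :=
  ∀ f : Fn N, Continuous f →
    Continuous (P f) ∧
    ∀ (w : Equiv.Perm (Fin N)) (L : List ℕ),
      (∀ j ∈ L, j + 1 < N) → wordPerm N L = w →
      ∀ x ∈ alcove w, P f x = wordOp γ L f (permPt w x)

open scoped Classical in
/-- The operator `Λ_j` entering the Dunkl-type operator `∂_j^γ = ∂_j - γ Λ_j`. -/
def LambdaOp {N : ℕ} (j : Fin N) (f : Fn N) : Fn N := fun x =>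
  (∑ k : Fin N, if k < j ∧ x k < x j then f (permPt (Equiv.swap j k) x) else 0)
    - ∑ k : Fin N, if j < k ∧ x j < x k then f (permPt (Equiv.swap j k) x) else 0

/-- Membership in `CB^∞(ℝ^N)`: continuous, and smooth on every alcove. -/
def CBsmooth {N : ℕ} (f : Fn N) : Prop :=
  Continuous f ∧ ∀ w : Equiv.Perm (Fin N), ContDiffOn ℝ (⊤ : ℕ∞) f (alcove w)

/-- Membership in `sol^γ_λ`: lies in `CB^∞(ℝ^N)` and satisfies `∂_j^γ f = iλ_j f`
on the regular vectors for every `j`. -/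
def memSol {N : ℕ} (γ : ℝ) (lam : Fin N → ℂ) (f : Fn N) : Prop :=
  CBsmooth f ∧ ∀ j : Fin N, ∀ x ∈ regPts N,
    pd j f x - (γ : ℂ) * LambdaOp j f x = Complex.I * lam j * f x

open scoped Classical in
/-- Coxeter length = number of inversions. -/
def invCount {N : ℕ} (w : Equiv.Perm (Fin N)) : ℕ :=
  (Finset.univ.filter fun p : Fin N × Fin N => p.1 < p.2 ∧ w p.2 < w p.1).card

/-- `x + δ(e_j - e_k)`. -/
def jumpShift {N : ℕ} (j k : Fin N) (δ : ℝ) (x : Pt N) : Pt N :=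
  Function.update (Function.update x j (x j + δ)) k (x k - δ)

/-- The derivative jump conditions with coupling `γ`: at every subregular point of
every wall `{x_j = x_k}` (`j < k`), the jump of `(∂_j - ∂_k) f` equals `2γ f(x)`. -/
def SatisfiesJump {N : ℕ} (γ : ℝ) (f : Fn N) : Prop :=
  ∀ j k : Fin N, j < k → ∀ x : Pt N, x j = x k →
    (∀ l m : Fin N, l < m → ¬(l = j ∧ m = k) → x l ≠ x m) →
    Filter.Tendsto
      (fun δ : ℝ =>
        (pd j f (jumpShift j k δ x) - pd k f (jumpShift j k δ x))
          - (pd j f (jumpShift j k (-δ) x) - pd k f (jumpShift j k (-δ) x)))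
      (nhdsWithin 0 (Set.Ioi 0)) (nhds (2 * (γ : ℂ) * f x))

open scoped Classical in
/-- Indicator of a strictly decreasing chain of real numbers. -/
def chainInd (l : List ℝ) : ℂ := if List.Chain' (fun a b => b < a) l then 1 else 0

/-- Iterated integral entering `ê⁻_{μ;i}`: for the list `[i₁,…,i_n]`, the upper limit of
the `y_m`-integral is `x_{i_{m-1}}` (threaded through `ub`, starting at `x_{N+1}`), the lower
limit is `x_{i_m}`, and the coordinate `i_m` of the argument is replaced by `y_m`. -/
def eMinusAux {N : ℕ} (μ : ℂ) (f : Fn N) (x : Pt (N + 1)) :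
    List (Fin N) → ℝ → Pt N → ℂ
  | [], _, z => f z
  | i :: rest, ub, z =>
      ∫ y in (x i.castSucc)..ub,
        Complex.exp (Complex.I * μ * ((x i.castSucc - y : ℝ) : ℂ)) *
          eMinusAux μ f x rest (x i.castSucc) (Function.update z i y)

/-- The elementary creation operator `ê⁻_{μ;i}`. -/
def ehatMinus {N : ℕ} (μ : ℂ) (l : List (Fin N)) (f : Fn N) : Fn (N + 1) :=
  fun x =>
    chainInd (x (Fin.last N) :: l.map fun i => x i.castSucc) *
      Complex.exp (Complex.I * μ * ((x (Fin.last N) : ℝ) : ℂ)) *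
      eMinusAux μ f x l (x (Fin.last N)) (fun j => x j.castSucc)

/-- Iterated integral entering `ê⁺_{μ;i}`: the lower limit of the `y_m`-integral is
`x_{i_{m+1}+1}` (the coordinate of the next entry, or `x_1` at the end), the upper limit
is `x_{i_m+1}`, and the coordinate `i_m` of the argument is replaced by `y_m`. -/
def ePlusAux {N : ℕ} (μ : ℂ) (f : Fn N) (x : Pt (N + 1)) :
    List (Fin N) → Pt N → ℂ
  | [], z => f z
  | i :: rest, z =>
      ∫ y in (match rest with
              | [] => x 0
              | j :: _ => x j.succ)..(x i.succ),
        Complex.exp (Complex.I * μ * ((x i.succ - y : ℝ) : ℂ)) *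
          ePlusAux μ f x rest (Function.update z i y)

/-- The elementary creation operator `ê⁺_{μ;i}`. -/
def ehatPlus {N : ℕ} (μ : ℂ) (l : List (Fin N)) (f : Fn N) : Fn (N + 1) :=
  fun x =>
    chainInd ((l.map fun i => x i.succ) ++ [x 0]) *
      Complex.exp (Complex.I * μ * ((x 0 : ℝ) : ℂ)) *
      ePlusAux μ f x l (fun j => x j.succ)

/-- The non-symmetric creation operator
`b⁻_μ = ∑_{n=0}^N γⁿ ∑_{i ∈ 𝔦ⁿ_{[1,N]}} ê⁻_{μ;i}` (tuples of pairwise distinct indices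
are encoded as injections `Fin n ↪ Fin N`). -/
def bMinus {N : ℕ} (γ : ℝ) (μ : ℂ) (f : Fn N) : Fn (N + 1) :=
  fun x => ∑ n ∈ Finset.range (N + 1), (γ : ℂ) ^ n *
    ∑ e : Fin n ↪ Fin N, ehatMinus μ (List.ofFn ⇑e) f x

/-- The non-symmetric creation operator `b⁺_μ`. -/
def bPlus {N : ℕ} (γ : ℝ) (μ : ℂ) (f : Fn N) : Fn (N + 1) :=
  fun x => ∑ n ∈ Finset.range (N + 1), (γ : ℂ) ^ n *
    ∑ e : Fin n ↪ Fin N, ehatPlus μ (List.ofFn ⇑e) f x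

/-- `φ̌⁺`: evaluate the first coordinate at `x⁺`. -/
def phiCheckPlus {k : ℕ} (xp : ℝ) (f : Fn (k + 1)) : Fn k := fun x => f (Fin.cons xp x)

/-- `φ̌⁻`: evaluate the last coordinate at `x⁻`. -/
def phiCheckMinus {k : ℕ} (xm : ℝ) (f : Fn (k + 1)) : Fn k := fun x => f (Fin.snoc x xm)

/-- `b^ε_μ`, `ε = +` encoded as `true` and `ε = -` as `false`. -/
def bEps (ε : Bool) {k : ℕ} (γ : ℝ) (μ : ℂ) (f : Fn k) : Fn (k + 1) :=
  if ε then bPlus γ μ f else bMinus γ μ f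

/-- `ê^ε_{μ;i}`. -/
def ehatEps (ε : Bool) {N : ℕ} (μ : ℂ) (l : List (Fin N)) (f : Fn N) : Fn (N + 1) :=
  if ε then ehatPlus μ l f else ehatMinus μ l f

/-- `φ̌^ε`. -/
def phiEps (ε : Bool) {k : ℕ} (xp xm : ℝ) (f : Fn (k + 1)) : Fn k :=
  if ε then phiCheckPlus xp f else phiCheckMinus xm f

/-- `a^ε_μ = φ̌^ε ∘ b^ε_μ`. -/
def aEps (ε : Bool) {k : ℕ} (γ : ℝ) (xp xm : ℝ) (μ : ℂ) (f : Fn k) : Fn k :=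
  phiEps ε xp xm (bEps ε γ μ f)

/-- The sign `ε = ±1` of `ε ∈ {+,-}`. -/
def sgn (ε : Bool) : ℂ := if ε then 1 else -1

/-- `s⁺` (swap of the first two coordinates of `ℝ^{N+2}`) resp. `s⁻` (swap of the last two). -/
def sEps (ε : Bool) (N : ℕ) : Equiv.Perm (Fin (N + 2)) :=
  if ε then Equiv.swap 0 1 else Equiv.swap ⟨N, by omega⟩ ⟨N + 1, by omega⟩

/-- Iterated integral entering `č⁺_{μ;i}` (the variables `y_1,…,y_n`). -/
def cAuxPlus {N : ℕ} (μ : ℂ) (xp : ℝ) (x : Pt N) (g : Pt N → ℂ) :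
    List (Fin N) → Pt N → ℂ
  | [], z => g z
  | i :: rest, z =>
      ∫ y in (match rest with | [] => xp | j :: _ => x j)..(x i),
        Complex.exp (Complex.I * μ * ((x i - y : ℝ) : ℂ)) *
          cAuxPlus μ xp x g rest (Function.update z i y)

/-- The elementary operator `č⁺_{μ;i}` (with `x_{i_0} := x⁻` and `x_{i_{n+1}} := x⁺`;
the variable `y_0` is plugged in as the final argument of `f`). -/
def cCheckPlus {N : ℕ} (μ : ℂ) (xp xm : ℝ) (l : List (Fin N)) (f : Fn (N + 1)) : Fn N :=
  fun x =>
    chainInd (l.map x) * Complex.exp (Complex.I * μ * ((xp : ℝ) : ℂ)) *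
      ∫ y0 in (match l with | [] => xp | i :: _ => x i)..xm,
        Complex.exp (Complex.I * μ * ((xm - y0 : ℝ) : ℂ)) *
          cAuxPlus μ xp x (fun z => f (Fin.snoc z y0)) l x

/-- Iterated integral entering `č⁻_{μ;i}` (the variables `y_1,…,y_{n+1}`;
the variable `y_{n+1}` is plugged in as the first argument of `f`). -/
def cAuxMinus {N : ℕ} (μ : ℂ) (xp : ℝ) (x : Pt N) (f : Fn (N + 1)) :
    List (Fin N) → ℝ → Pt N → ℂ
  | [], ub, z =>
      ∫ y in xp..ub, Complex.exp (Complex.I * μ * ((xp - y : ℝ) : ℂ)) * f (Fin.cons y z)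
  | i :: rest, ub, z =>
      ∫ y in (x i)..ub,
        Complex.exp (Complex.I * μ * ((x i - y : ℝ) : ℂ)) *
          cAuxMinus μ xp x f rest (x i) (Function.update z i y)

/-- The elementary operator `č⁻_{μ;i}` (with `x_{i_0} := x⁻` and `x_{i_{n+1}} := x⁺`). -/
def cCheckMinus {N : ℕ} (μ : ℂ) (xp xm : ℝ) (l : List (Fin N)) (f : Fn (N + 1)) : Fn N :=
  fun x => chainInd (l.map x) * Complex.exp (Complex.I * μ * ((xm : ℝ) : ℂ)) *
    cAuxMinus μ xp x f l xm x

/-- `č^ε_{μ;i}`. -/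
def cCheckEps (ε : Bool) {N : ℕ} (μ : ℂ) (xp xm : ℝ) (l : List (Fin N)) (f : Fn (N + 1)) :
    Fn N :=
  if ε then cCheckPlus μ xp xm l f else cCheckMinus μ xp xm l f

/-- The operator `c⁺_μ = ∑_{n=0}^N γ^{n+1} ∑_i č⁺_{μ;i}`. -/
def cPlusOp {N : ℕ} (γ : ℝ) (μ : ℂ) (xp xm : ℝ) (f : Fn (N + 1)) : Fn N :=
  fun x => ∑ n ∈ Finset.range (N + 1), (γ : ℂ) ^ (n + 1) *
    ∑ e : Fin n ↪ Fin N, cCheckPlus μ xp xm (List.ofFn ⇑e) f x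

/-- The operator `c⁻_μ = ∑_{n=0}^N γ^{n+1} ∑_i č⁻_{μ;i}`. -/
def cMinusOp {N : ℕ} (γ : ℝ) (μ : ℂ) (xp xm : ℝ) (f : Fn (N + 1)) : Fn N :=
  fun x => ∑ n ∈ Finset.range (N + 1), (γ : ℂ) ^ (n + 1) *
    ∑ e : Fin n ↪ Fin N, cCheckMinus μ xp xm (List.ofFn ⇑e) f x

/-- `c^ε_μ`. -/
def cEps (ε : Bool) {N : ℕ} (γ : ℝ) (μ : ℂ) (xp xm : ℝ) (f : Fn (N + 1)) : Fn N :=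
  if ε then cPlusOp γ μ xp xm f else cMinusOp γ μ xp xm f

/-- The closed box `J^M = [x⁺,x⁻]^M`. -/
def box (M : ℕ) (xp xm : ℝ) : Set (Pt M) := {x | ∀ j, x j ∈ Set.Icc xp xm}

/-- The `L²(J^M)` inner product `⟨u,v⟩_M = ∫_{J^M} u · conj v`. -/
def ipJ {M : ℕ} (xp xm : ℝ) (u v : Fn M) : ℂ :=
  ∫ x in box M xp xm, u x * (starRingEnd ℂ) (v x)

/-- Smooth functions compactly supported in the open box `(x⁺,x⁻)^M`. -/
def IsTestFn {M : ℕ} (xp xm : ℝ) (f : Fn M) : Prop :=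
  ContDiff ℝ (⊤ : ℕ∞) f ∧ HasCompactSupport f ∧ ∀ x, f x ≠ 0 → ∀ j, x j ∈ Set.Ioo xp xm

/-- The symmetrizer `𝒮_N = (1/N!) ∑_{w ∈ S_N} w`. -/
def symN (N : ℕ) (f : Fn N) : Fn N :=
  fun x => (N.factorial : ℂ)⁻¹ * ∑ w : Equiv.Perm (Fin N), f (permPt w⁻¹ x)

open scoped Classical in
/-- `G^γ_μ = ∏_{j<k} (μ_j - μ_k - iγ)/(μ_j - μ_k)`. -/
def Gcoef {N : ℕ} (γ : ℝ) (mu : Fin N → ℂ) : ℂ :=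
  ∏ p ∈ Finset.univ.filter (fun p : Fin N × Fin N => p.1 < p.2),
    (mu p.1 - mu p.2 - Complex.I * (γ : ℂ)) / (mu p.1 - mu p.2)

/-- The decreasing rearrangement `x↓`. -/
def decRearrange {N : ℕ} (x : Pt N) : Pt N := fun j => x (Tuple.sort x (Fin.rev j))

/-- The Bethe wavefunction
`Ψ_λ(x) = (1/N!) ∑_{w ∈ S_N} G^γ_{wλ} exp(i ∑_j (wλ)_j (x↓)_j)`. -/
def Bethe {N : ℕ} (γ : ℝ) (lam : Fin N → ℂ) : Fn N :=
  fun x => (N.factorial : ℂ)⁻¹ * ∑ w : Equiv.Perm (Fin N),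
    Gcoef γ (fun j => lam (w⁻¹ j)) *
      Complex.exp (Complex.I * ∑ j, lam (w⁻¹ j) * ((decRearrange x j : ℝ) : ℂ))

/-- The transpositions of consecutive entries of a list:
`adjSwaps [a₁,…,a_m] = [(a₁ a₂), (a₂ a₃), …, (a_{m-1} a_m)]`. -/
def adjSwaps {M : ℕ} : List (Fin M) → List (Equiv.Perm (Fin M))
  | [] => []
  | [_] => []
  | a :: b :: rest => Equiv.swap a b :: adjSwaps (b :: rest)

/-- `b⁻_{λ_N} (b⁻_{λ_{N-1}} (⋯ (b⁻_{λ_1} 1)))`. -/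
def iterBMinus (γ : ℝ) : (N : ℕ) → (Fin N → ℂ) → Fn N
  | 0, _ => fun _ => 1
  | N + 1, lam => bMinus γ (lam (Fin.last N)) (iterBMinus γ N (fun j => lam j.castSucc))

/-- `b⁺_{λ_1} (b⁺_{λ_2} (⋯ (b⁺_{λ_N} 1)))`. -/
def iterBPlus (γ : ℝ) : (N : ℕ) → (Fin N → ℂ) → Fn N
  | 0, _ => fun _ => 1
  | N + 1, lam => bPlus γ (lam 0) (iterBPlus γ N (fun j => lam j.succ))

section MyLemmas

theorem perm_inv_apply_self' {N : ℕ} (w : Equiv.Perm (Fin N)) (m : Fin N) : w⁻¹ (w m) = m :=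
  Equiv.Perm.inv_eq_iff_eq.mpr rfl

theorem perm_apply_inv_self' {N : ℕ} (w : Equiv.Perm (Fin N)) (m : Fin N) : w (w⁻¹ m) = m :=
  (Equiv.eq_symm_apply w).mp rfl

-- L1
theorem decR_eq {N : ℕ} (x : Pt N) (σ : Equiv.Perm (Fin N)) (h : Monotone (x ∘ σ)) :
    ∀ j, decRearrange x j = x (σ (Fin.rev j)) := by
  intro j
  have := Tuple.comp_sort_eq_comp_iff_monotone.mpr h
  unfold decRearrange
  rw [show x (Tuple.sort x (Fin.rev j)) = (x ∘ Tuple.sort x) (Fin.rev j) from rfl, ← this]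
  rfl

-- L2 weak
theorem decR_eq_of_weak {N : ℕ} (x : Pt N) (w : Equiv.Perm (Fin N))
    (h : ∀ i i' : Fin N, i < i' → x (w⁻¹ i') ≤ x (w⁻¹ i)) :
    ∀ j, decRearrange x j = x (w⁻¹ j) := by
  intro j
  have hm : Monotone (x ∘ ((Fin.revPerm : Equiv.Perm (Fin N)).trans w⁻¹)) := by
    intro a b hab
    rcases eq_or_lt_of_le hab with rfl | hlt
    · exact le_refl _
    · exact h _ _ (by simpa using Fin.rev_lt_rev.mpr hlt)
  have := decR_eq x _ hm j
  simpa [Equiv.trans_apply] using this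

-- L3: continuity of order statistics
theorem decR_coord_eq_sup {N : ℕ} (j : Fin N) (x : Pt N) :
    decRearrange x j =
      (Finset.univ.powersetCard (j.val + 1)).sup'
        (Finset.powersetCard_nonempty.mpr (by simpa using Nat.succ_le_of_lt j.isLt))
        (fun S => if h : S.Nonempty then S.inf' h x else 0) := by
  set σ := Tuple.sort x with hσ
  have hmono : Monotone (x ∘ σ) := Tuple.monotone_sort x
  set r := Fin.rev j with hr
  have hrval : (r : ℕ) = N - 1 - j.val := by simp [hr, Fin.rev]; omega
  have hdec : decRearrange x j = x (σ r) := rfl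
  rw [hdec]
  apply le_antisymm
  · -- x (σ r) ≤ sup'
    set S₀ := Finset.image σ (Finset.Ici r) with hS₀
    have hS₀mem : S₀ ∈ Finset.univ.powersetCard (j.val + 1) := by
      rw [Finset.mem_powersetCard]
      constructor
      · exact Finset.subset_univ _
      · rw [hS₀, Finset.card_image_of_injective _ σ.injective, Fin.card_Ici, hrval]
        have := j.isLt; omega
    have hne : S₀.Nonempty := ⟨σ r, by simp [hS₀]⟩
    have hval : x (σ r) ≤ if h : S₀.Nonempty then S₀.inf' h x else 0 := by
      rw [dif_pos hne]
      apply Finset.le_inf'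
      intro b hb
      rw [hS₀, Finset.mem_image] at hb
      obtain ⟨i, hi, rfl⟩ := hb
      exact hmono (Finset.mem_Ici.mp hi)
    exact hval.trans (Finset.le_sup' (fun S => if h : S.Nonempty then S.inf' h x else 0) hS₀mem)
  · apply Finset.sup'_le
    intro S hS
    rw [Finset.mem_powersetCard] at hS
    have hne : S.Nonempty := Finset.card_pos.mp (by omega)
    rw [dif_pos hne]
    -- find i ≤ r with σ i ∈ S
    have : ∃ i ∈ Finset.image σ.symm S, i ≤ r := by
      by_contra hcon
      push_neg at hcon
      have hsub : Finset.image σ.symm S ⊆ Finset.Ioi r := by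
        intro i hi; exact Finset.mem_Ioi.mpr (hcon i hi)
      have hcard := Finset.card_le_card hsub
      rw [Finset.card_image_of_injective _ σ.symm.injective, Fin.card_Ioi, hS.2, hrval] at hcard
      have := j.isLt; omega
    obtain ⟨i, hi, hir⟩ := this
    rw [Finset.mem_image] at hi
    obtain ⟨a, ha, rfl⟩ := hi
    calc S.inf' hne x ≤ x a := Finset.inf'_le _ ha
      _ = (x ∘ σ) (σ.symm a) := by simp
      _ ≤ (x ∘ σ) r := hmono hir

theorem decR_coord_continuous {N : ℕ} (j : Fin N) :
    Continuous (fun x : Pt N => decRearrange x j) := by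
  have : (fun x : Pt N => decRearrange x j) =
      (fun x : Pt N => (Finset.univ.powersetCard (j.val + 1)).sup'
        (Finset.powersetCard_nonempty.mpr (by simpa using Nat.succ_le_of_lt j.isLt))
        (fun S => if h : S.Nonempty then S.inf' h x else 0)) := by
    funext x; exact decR_coord_eq_sup j x
  rw [this]
  apply Continuous.finset_sup'_apply
  intro S _
  by_cases h : S.Nonempty
  · simp only [dif_pos h]
    exact Continuous.finset_inf'_apply h (fun i _ => continuous_apply i)
  · simp only [dif_neg h]; exact continuous_const

theorem decR_continuous {N : ℕ} : Continuous (fun x : Pt N => decRearrange x) :=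
  continuous_pi fun j => decR_coord_continuous j


theorem decR_permPt {N : ℕ} (w : Equiv.Perm (Fin N)) (x : Pt N) :
    decRearrange (permPt w x) = decRearrange x := by
  funext j
  set g := permPt w x with hg
  have hcomp : (x ∘ ((Tuple.sort g).trans w⁻¹)) = g ∘ Tuple.sort g := rfl
  have hm : Monotone (x ∘ ((Tuple.sort g).trans w⁻¹)) := by
    rw [hcomp]; exact Tuple.monotone_sort g
  have := decR_eq x _ hm j
  rw [this]
  rfl

/-- Exponential sum with coefficients. -/
def ES {N : ℕ} (lam : Fin N → ℂ) (w : Equiv.Perm (Fin N)) (c : Equiv.Perm (Fin N) → ℂ) : Fn N :=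
  fun x => ∑ u : Equiv.Perm (Fin N),
    c u * Complex.exp (Complex.I * ∑ m, lam (u⁻¹ m) * ((x (w⁻¹ m) : ℝ) : ℂ))

theorem Bethe_eq_ES {N : ℕ} (γ : ℝ) (lam : Fin N → ℂ) (w : Equiv.Perm (Fin N)) (x : Pt N)
    (h : ∀ i i' : Fin N, i < i' → x (w⁻¹ i') ≤ x (w⁻¹ i)) :
    Bethe γ lam x
      = ES lam w (fun u => (N.factorial : ℂ)⁻¹ * Gcoef γ (fun j => lam (u⁻¹ j))) x := by
  unfold Bethe ES
  rw [Finset.mul_sum]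
  refine Finset.sum_congr rfl (fun u _ => ?_)
  have : ∀ m : Fin N, decRearrange x m = x (w⁻¹ m) := decR_eq_of_weak x w h
  simp only [this]
  ring

theorem ES_contDiff {N : ℕ} (lam : Fin N → ℂ) (w : Equiv.Perm (Fin N))
    (c : Equiv.Perm (Fin N) → ℂ) : ContDiff ℝ (⊤ : ℕ∞) (ES lam w c) := by
  unfold ES
  apply ContDiff.sum
  intro u _
  apply ContDiff.mul contDiff_const
  apply Complex.contDiff_exp.comp
  apply ContDiff.mul contDiff_const
  apply ContDiff.sum
  intro m _
  apply ContDiff.mul contDiff_const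
  exact Complex.ofRealCLM.contDiff.comp (contDiff_pi.mp contDiff_id (w⁻¹ m))

theorem pd_ES {N : ℕ} (lam : Fin N → ℂ) (w : Equiv.Perm (Fin N))
    (c : Equiv.Perm (Fin N) → ℂ) (j : Fin N) :
    pd j (ES lam w c) = ES lam w (fun u => Complex.I * lam (u⁻¹ (w j)) * c u) := by
  funext x
  unfold pd
  have key : ∀ u : Equiv.Perm (Fin N),
      HasDerivAt (fun t : ℝ =>
          c u * Complex.exp (Complex.I * ∑ m, lam (u⁻¹ m) *
            (((Function.update x j t) (w⁻¹ m) : ℝ) : ℂ)))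
        (Complex.I * lam (u⁻¹ (w j)) * (c u * Complex.exp (Complex.I * ∑ m, lam (u⁻¹ m) *
            ((x (w⁻¹ m) : ℝ) : ℂ)))) (x j) := by
    intro u
    have hsplit : ∀ t : ℝ,
        (Complex.I * ∑ m, lam (u⁻¹ m) * (((Function.update x j t) (w⁻¹ m) : ℝ) : ℂ))
          = (Complex.I * lam (u⁻¹ (w j))) * (t : ℂ)
            + Complex.I * ∑ m ∈ Finset.univ.erase (w j),
                lam (u⁻¹ m) * ((x (w⁻¹ m) : ℝ) : ℂ) := by
      intro t
      rw [← Finset.add_sum_erase _ _ (Finset.mem_univ (w j))]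
      have h1 : (Function.update x j t) (w⁻¹ (w j)) = t := by
        rw [perm_inv_apply_self', Function.update_self]
      have h2 : ∀ m ∈ Finset.univ.erase (w j),
          (Function.update x j t) (w⁻¹ m) = x (w⁻¹ m) := by
        intro m hm
        have : w⁻¹ m ≠ j := by
          intro hc
          apply Finset.ne_of_mem_erase hm
          rw [← hc]; simp
        exact Function.update_of_ne this _ _
      rw [h1, Finset.sum_congr rfl (fun m hm => by rw [h2 m hm])]
      ring
    have hD : HasDerivAt (fun t : ℝ =>
        (Complex.I * lam (u⁻¹ (w j))) * (t : ℂ)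
          + Complex.I * ∑ m ∈ Finset.univ.erase (w j),
              lam (u⁻¹ m) * ((x (w⁻¹ m) : ℝ) : ℂ))
        (Complex.I * lam (u⁻¹ (w j))) (x j) := by
      have hofreal : HasDerivAt (fun t : ℝ => (t : ℂ)) 1 (x j) := by
        simpa using (hasDerivAt_id (x j)).ofReal_comp
      simpa using (hofreal.const_mul (Complex.I * lam (u⁻¹ (w j)))).add_const
        (Complex.I * ∑ m ∈ Finset.univ.erase (w j), lam (u⁻¹ m) * ((x (w⁻¹ m) : ℝ) : ℂ))
    have := ((hD.cexp).const_mul (c u))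
    have heq : (fun t : ℝ => c u * Complex.exp ((Complex.I * lam (u⁻¹ (w j))) * (t : ℂ)
          + Complex.I * ∑ m ∈ Finset.univ.erase (w j),
              lam (u⁻¹ m) * ((x (w⁻¹ m) : ℝ) : ℂ)))
        = (fun t : ℝ => c u * Complex.exp (Complex.I * ∑ m, lam (u⁻¹ m) *
            (((Function.update x j t) (w⁻¹ m) : ℝ) : ℂ))) := by
      funext t; rw [hsplit t]
    rw [heq] at this
    refine this.congr_deriv ?_
    rw [← hsplit (x j)]
    have hxx : ∀ m : Fin N, ((Function.update x j (x j)) (w⁻¹ m) : ℝ) = x (w⁻¹ m) := by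
      intro m; rw [Function.update_eq_self]
    simp only [hxx]
    ring
  have total := HasDerivAt.fun_sum (fun u (_ : u ∈ Finset.univ) => key u)
  have heq2 : (fun t : ℝ => ES lam w c (Function.update x j t))
      = fun t : ℝ => ∑ u : Equiv.Perm (Fin N),
          c u * Complex.exp (Complex.I * ∑ m, lam (u⁻¹ m) *
            (((Function.update x j t) (w⁻¹ m) : ℝ) : ℂ)) := rfl
  rw [heq2, total.deriv]
  unfold ES
  exact Finset.sum_congr rfl (fun u _ => by ring)

theorem alcove_open {N : ℕ} (w : Equiv.Perm (Fin N)) : IsOpen (alcove w) := by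
  have : alcove w = ⋂ (p : Fin N × Fin N) (_ : p.1 < p.2),
      {x : Pt N | x (w⁻¹ p.2) < x (w⁻¹ p.1)} := by
    ext x
    simp only [alcove, posAlcove, permPt, Set.mem_iInter, Set.mem_setOf_eq]
    exact ⟨fun h p hp => h p.1 p.2 hp, fun h i i' hii => h (i, i') hii⟩
  rw [this]
  refine isOpen_iInter_of_finite (fun p => ?_)
  refine isOpen_iInter_of_finite (fun hp => ?_)
  exact isOpen_lt (continuous_apply _) (continuous_apply _)

theorem pd_locality {N : ℕ} (f g : Fn N) (U : Set (Pt N)) (hU : IsOpen U)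
    (hfg : ∀ y ∈ U, f y = g y) (j : Fin N) : ∀ y ∈ U, pd j f y = pd j g y := by
  intro y hy
  unfold pd
  apply Filter.EventuallyEq.deriv_eq
  have hc : Continuous (fun t : ℝ => Function.update y j t) := by
    apply continuous_pi
    intro m
    by_cases hm : m = j
    · subst hm; simpa [Function.update_self] using continuous_id'
    · simp only [Function.update_of_ne hm]; exact continuous_const
  have hmem : ∀ᶠ t in nhds (y j), Function.update y j t ∈ U := by
    have : Function.update y j (y j) = y := Function.update_eq_self j y
    have := hc.continuousAt (x := y j) (hU.mem_nhds (by rw [this]; exact hy))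
    exact this
  filter_upwards [hmem] with t ht using hfg _ ht

theorem reg_mem_alcove {N : ℕ} (x : Pt N) (hx : Function.Injective x) :
    ∃ w : Equiv.Perm (Fin N), ∀ i i' : Fin N, i < i' → x (w⁻¹ i') < x (w⁻¹ i) := by
  set σ := Tuple.sort x with hσ
  have hsm : StrictMono (x ∘ σ) :=
    (Tuple.monotone_sort x).strictMono_of_injective (hx.comp σ.injective)
  refine ⟨((Fin.revPerm : Equiv.Perm (Fin N)).trans σ)⁻¹, fun i i' hii => ?_⟩
  simp only [inv_inv, Equiv.trans_apply]
  exact hsm (by simpa using Fin.rev_lt_rev.mpr hii)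

theorem helmholtz_lemma {N : ℕ} (γ : ℝ) (lam : Fin N → ℂ) (x : Pt N) (hx : x ∈ regPts N) :
    -(∑ j : Fin N, pd j (pd j (Bethe γ lam)) x)
      = (∑ j : Fin N, (lam j) ^ 2) * Bethe γ lam x := by
  have hinj : Function.Injective x := by
    intro a b hab
    by_contra h
    exact hx a b h hab
  obtain ⟨w, hw⟩ := reg_mem_alcove x hinj
  have halc : x ∈ alcove w := fun i i' h => hw i i' h
  set c₀ : Equiv.Perm (Fin N) → ℂ :=
    fun u => (N.factorial : ℂ)⁻¹ * Gcoef γ (fun j => lam (u⁻¹ j)) with hc₀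
  have heqU : ∀ y ∈ alcove w, Bethe γ lam y = ES lam w c₀ y := by
    intro y hy
    exact Bethe_eq_ES γ lam w y (fun i i' h => le_of_lt (hy i i' h))
  have key : ∀ j : Fin N, pd j (pd j (Bethe γ lam)) x
      = ES lam w (fun u => Complex.I * lam (u⁻¹ (w j)) *
          (Complex.I * lam (u⁻¹ (w j)) * c₀ u)) x := by
    intro j
    have h1 : ∀ y ∈ alcove w, pd j (Bethe γ lam) y = pd j (ES lam w c₀) y :=
      pd_locality _ _ _ (alcove_open w) heqU j
    have h2 : pd j (pd j (Bethe γ lam)) x = pd j (pd j (ES lam w c₀)) x :=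
      pd_locality _ _ _ (alcove_open w) h1 j x halc
    rw [h2, pd_ES, pd_ES]
  simp only [key]
  rw [heqU x halc]
  unfold ES
  rw [Finset.sum_comm, ← Finset.sum_neg_distrib, Finset.mul_sum]
  refine Finset.sum_congr rfl (fun u _ => ?_)
  set E := Complex.exp (Complex.I * ∑ m, lam (u⁻¹ m) * ((x (w⁻¹ m) : ℝ) : ℂ)) with hE
  have hterm : ∀ j : Fin N,
      Complex.I * lam (u⁻¹ (w j)) * (Complex.I * lam (u⁻¹ (w j)) * c₀ u) * E
        = -((lam (u⁻¹ (w j))) ^ 2 * (c₀ u * E)) := by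
    intro j
    have : Complex.I * Complex.I = -1 := Complex.I_mul_I
    calc Complex.I * lam (u⁻¹ (w j)) * (Complex.I * lam (u⁻¹ (w j)) * c₀ u) * E
        = (Complex.I * Complex.I) * ((lam (u⁻¹ (w j))) ^ 2 * (c₀ u * E)) := by ring
      _ = -((lam (u⁻¹ (w j))) ^ 2 * (c₀ u * E)) := by rw [this]; ring
  rw [Finset.sum_congr rfl (fun j _ => hterm j), Finset.sum_neg_distrib, neg_neg,
    ← Finset.sum_mul]
  have hre : ∑ j : Fin N, (lam (u⁻¹ (w j))) ^ 2 = ∑ j : Fin N, (lam j) ^ 2 := by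
    have := Equiv.sum_comp (w.trans (u⁻¹ : Equiv.Perm (Fin N))) (fun j => (lam j) ^ 2)
    simpa [Equiv.trans_apply] using this
  rw [hre]

open scoped Classical in
theorem Gcoef_swap_identity {N : ℕ} (γ : ℝ) (ν : Fin N → ℂ) (hν : Function.Injective ν)
    (q q' : Fin N) (hqq' : (q : ℕ) + 1 = (q' : ℕ)) :
    Gcoef γ ν * ((ν q - ν q') + Complex.I * γ)
      = Gcoef γ (fun m => ν (Equiv.swap q q' m)) * ((ν q - ν q') - Complex.I * γ) := by
  have hlt : q < q' := by rw [Fin.lt_def]; omega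
  have hne : q ≠ q' := ne_of_lt hlt
  set s := Equiv.swap q q' with hs
  have hval : ∀ c : Fin N, (s c).val = if c = q then q'.val else if c = q' then q.val
      else c.val := by
    intro c
    rw [hs, Equiv.swap_apply_def]
    split_ifs <;> rfl
  have horder : ∀ a b : Fin N, a < b → ¬(a = q ∧ b = q') → s a < s b := by
    intro a b hab hn
    have hab' := Fin.lt_def.mp hab
    rw [Fin.lt_def, hval a, hval b]
    split_ifs <;> simp only [Fin.ext_iff] at * <;> omega
  set P := Finset.univ.filter (fun p : Fin N × Fin N => p.1 < p.2) with hP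
  have hmem : (q, q') ∈ P := by simp [hP, hlt]
  set F : Fin N × Fin N → ℂ :=
    fun p => (ν p.1 - ν p.2 - Complex.I * γ) / (ν p.1 - ν p.2) with hF
  set G2 : Fin N × Fin N → ℂ :=
    fun p => (ν (s p.1) - ν (s p.2) - Complex.I * γ) / (ν (s p.1) - ν (s p.2)) with hG2
  have hGν : Gcoef γ ν = F (q, q') * ∏ p ∈ P.erase (q, q'), F p := by
    rw [Gcoef, Finset.mul_prod_erase _ _ hmem]
  have hGν' : Gcoef γ (fun m => ν (s m)) = G2 (q, q') * ∏ p ∈ P.erase (q, q'), G2 p := by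
    rw [Gcoef, Finset.mul_prod_erase _ _ hmem]
  have hmaps : ∀ p ∈ P.erase (q, q'), (s p.1, s p.2) ∈ P.erase (q, q') := by
    intro p hp
    rw [Finset.mem_erase] at hp ⊢
    obtain ⟨hpne, hpP⟩ := hp
    have hplt : p.1 < p.2 := by simpa [hP] using hpP
    have hnp : ¬(p.1 = q ∧ p.2 = q') := by
      intro ⟨h1, h2⟩; exact hpne (Prod.ext h1 h2)
    constructor
    · intro hc
      have h1 : s p.1 = q := congrArg Prod.fst hc
      have h2 : s p.2 = q' := congrArg Prod.snd hc
      have e1 : p.1 = q' := by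
        have h3 := congrArg s h1
        rwa [show s (s p.1) = p.1 from Equiv.swap_apply_self _ _ _,
          show s q = q' from Equiv.swap_apply_left _ _] at h3
      have e2 : p.2 = q := by
        have h3 := congrArg s h2
        rwa [show s (s p.2) = p.2 from Equiv.swap_apply_self _ _ _,
          show s q' = q from Equiv.swap_apply_right _ _] at h3
      rw [e1, e2] at hplt
      exact absurd hlt (lt_asymm hplt)
    · simp only [hP, Finset.mem_filter, Finset.mem_univ, true_and]
      exact horder p.1 p.2 hplt hnp
  have hprodeq : ∏ p ∈ P.erase (q, q'), F p = ∏ p ∈ P.erase (q, q'), G2 p := by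
    apply Finset.prod_nbij' (fun p => (s p.1, s p.2)) (fun p => (s p.1, s p.2))
      hmaps hmaps
    · intro p _
      ext <;> simp [hs]
    · intro p _
      ext <;> simp [hs]
    · intro p _
      simp only [hF, hG2]
      rw [show s (s p.1) = p.1 from Equiv.swap_apply_self _ _ _,
        show s (s p.2) = p.2 from Equiv.swap_apply_self _ _ _]
  rw [hGν, hGν', hprodeq]
  have hz : ν q - ν q' ≠ 0 := sub_ne_zero.mpr (fun h => hne (hν h))
  have hz' : ν q' - ν q ≠ 0 := sub_ne_zero.mpr (fun h => hne (hν h).symm)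
  have hG2v : G2 (q, q') = (ν q' - ν q - Complex.I * γ) / (ν q' - ν q) := by
    simp only [hG2]
    rw [show s q = q' from Equiv.swap_apply_left _ _,
      show s q' = q from Equiv.swap_apply_right _ _]
  have hFv : F (q, q') = (ν q - ν q' - Complex.I * γ) / (ν q - ν q') := rfl
  rw [hG2v, hFv]
  field_simp
  ring

theorem jumpShift_apply {N : ℕ} (j k : Fin N) (hjk : j ≠ k) (δ : ℝ) (x : Pt N) (c : Fin N) :
    jumpShift j k δ x c = if c = k then x k - δ else if c = j then x j + δ else x c := by
  unfold jumpShift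
  by_cases hck : c = k
  · rw [if_pos hck, hck, Function.update_self]
  · rw [if_neg hck, Function.update_of_ne hck]
    by_cases hcj : c = j
    · rw [if_pos hcj, hcj, Function.update_self]
    · rw [if_neg hcj, Function.update_of_ne hcj]

theorem jump_alcove {N : ℕ} (j k : Fin N) (hjk : j ≠ k) (x : Pt N) (hxjk : x j = x k)
    (hsub : ∀ a b : Fin N, a ≠ b → x a = x b → (a = j ∧ b = k) ∨ (a = k ∧ b = j))
    (δ₀ : ℝ) (hδ₀ : 0 < δ₀)
    (hgap : ∀ a b : Fin N, x a ≠ x b → 3 * δ₀ ≤ |x a - x b|) :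
    ∃ w : Equiv.Perm (Fin N),
      (∀ δ : ℝ, 0 < δ → δ < δ₀ → jumpShift j k δ x ∈ alcove w) ∧
      (∀ i i' : Fin N, i < i' → x (w⁻¹ i') ≤ x (w⁻¹ i)) ∧
      ((w j : ℕ) + 1 = (w k : ℕ)) := by
  have hbound : ∀ (δ : ℝ), 0 < δ → ∀ c, |jumpShift j k δ x c - x c| ≤ δ := by
    intro δ hδ c
    rw [jumpShift_apply j k hjk δ x c]
    split_ifs with h1 h2
    · rw [h1, abs_le]; constructor <;> linarith
    · rw [h2, abs_le]; constructor <;> linarith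
    · simp; linarith
  have C1 : ∀ (δ : ℝ), 0 < δ → δ < δ₀ → ∀ a b : Fin N, x a < x b →
      jumpShift j k δ x a < jumpShift j k δ x b := by
    intro δ hδ hδ' a b hab
    have h3 := hgap a b (ne_of_lt hab)
    rw [abs_sub_comm, abs_of_pos (by linarith)] at h3
    have ha := abs_le.mp (hbound δ hδ a)
    have hb := abs_le.mp (hbound δ hδ b)
    linarith [ha.1, ha.2, hb.1, hb.2]
  have C2 : ∀ (δ : ℝ), 0 < δ → jumpShift j k δ x k < jumpShift j k δ x j := by
    intro δ hδ
    rw [jumpShift_apply j k hjk δ x k, jumpShift_apply j k hjk δ x j,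
      if_pos rfl, if_neg hjk, if_pos rfl]
    linarith [hxjk.le, hxjk.ge]
  set δ' := δ₀ / 2 with hδ'def
  have hδ'pos : 0 < δ' := by positivity
  have hδ'lt : δ' < δ₀ := by rw [hδ'def]; linarith
  set x' := jumpShift j k δ' x with hx'
  have hexk : x' k = x k - δ' := by
    rw [hx', jumpShift_apply j k hjk δ' x k, if_pos rfl]
  have hexj : x' j = x j + δ' := by
    rw [hx', jumpShift_apply j k hjk δ' x j, if_neg hjk, if_pos rfl]
  have hexo : ∀ c, c ≠ j → c ≠ k → x' c = x c := by
    intro c hcj hck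
    rw [hx', jumpShift_apply j k hjk δ' x c, if_neg hck, if_neg hcj]
  have hinj : Function.Injective x' := by
    intro a b hab
    by_contra hne
    rcases lt_trichotomy (x a) (x b) with h | h | h
    · exact absurd hab (ne_of_lt (C1 δ' hδ'pos hδ'lt a b h))
    · rcases hsub a b hne h with ⟨haj, hbk⟩ | ⟨hak, hbj⟩
      · rw [haj, hbk, hexj, hexk] at hab; linarith [hxjk.le, hxjk.ge]
      · rw [hak, hbj, hexj, hexk] at hab; linarith [hxjk.le, hxjk.ge]
    · exact absurd hab.symm (ne_of_lt (C1 δ' hδ'pos hδ'lt b a h))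
  obtain ⟨w, hw⟩ := reg_mem_alcove x' hinj
  refine ⟨w, ?_, ?_, ?_⟩
  · intro δ hδ hδlt
    intro i i' hii
    show jumpShift j k δ x (w⁻¹ i') < jumpShift j k δ x (w⁻¹ i)
    have h' := hw i i' hii
    have hne : w⁻¹ i' ≠ w⁻¹ i := fun h => (ne_of_gt hii) (w⁻¹.injective h)
    rcases lt_trichotomy (x (w⁻¹ i')) (x (w⁻¹ i)) with h | h | h
    · exact C1 δ hδ hδlt _ _ h
    · rcases hsub _ _ hne h with ⟨haj, hbk⟩ | ⟨hak, hbj⟩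
      · rw [haj, hbk, hexj, hexk] at h'
        exfalso; linarith [hxjk.le, hxjk.ge]
      · rw [hak, hbj]
        exact C2 δ hδ
    · exact absurd h' (not_lt_of_gt (C1 δ' hδ'pos hδ'lt _ _ h))
  · intro i i' hii
    have h' := hw i i' hii
    by_contra hcon
    push_neg at hcon
    exact absurd h' (not_lt_of_gt (C1 δ' hδ'pos hδ'lt _ _ hcon))
  · have hwjk : w j < w k := by
      have hC2 := C2 δ' hδ'pos
      rcases lt_trichotomy (w j) (w k) with h | h | h
      · exact h
      · exact absurd (congrArg (⇑w⁻¹) h) (by simp [hjk])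
      · have := hw (w k) (w j) h
        simp only [perm_inv_apply_self'] at this
        exact absurd hC2 (not_lt_of_gt this)
    by_contra hadj
    have hmlt : (w j : ℕ) + 1 < (w k : ℕ) := by
      have := Fin.lt_def.mp hwjk; omega
    set m : Fin N := ⟨(w j : ℕ) + 1, lt_trans hmlt (w k).isLt⟩ with hm
    have h1 : w j < m := by rw [Fin.lt_def]; simp [hm]
    have h2 : m < w k := by rw [Fin.lt_def]; simpa [hm] using hmlt
    set a := w⁻¹ m with ha
    have haj : a ≠ j := by
      intro h
      have : m = w j := by rw [← perm_apply_inv_self' w m, ← ha, h]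
      rw [this] at h1; exact lt_irrefl _ h1
    have hak : a ≠ k := by
      intro h
      have : m = w k := by rw [← perm_apply_inv_self' w m, ← ha, h]
      rw [this] at h2; exact lt_irrefl _ h2
    have hup : x' a < x' j := by
      have := hw (w j) m h1
      simpa [ha] using this
    have hdown : x' k < x' a := by
      have := hw m (w k) h2
      simpa [ha] using this
    rw [hexj] at hup
    rw [hexk] at hdown
    rw [hexo a haj hak] at hup hdown
    have hxaj : x a ≠ x j := by
      intro h
      rcases hsub a j haj h with ⟨h1', _⟩ | ⟨h1', h2'⟩
      · exact haj h1'
      · exact hak h1'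
    have hg := hgap a j hxaj
    rcases abs_cases (x a - x j) with ⟨he, _⟩ | ⟨he, _⟩ <;> rw [he] at hg <;>
      [skip; skip] <;> linarith [hxjk.le, hxjk.ge]

theorem jumpShift_neg {N : ℕ} (j k : Fin N) (hjk : j ≠ k) (δ : ℝ) (x : Pt N) :
    jumpShift j k (-δ) x = jumpShift k j δ x := by
  funext c
  rw [jumpShift_apply j k hjk (-δ) x c, jumpShift_apply k j hjk.symm δ x c]
  by_cases hck : c = k
  · have hcj : c ≠ j := by rw [hck]; exact hjk.symm
    rw [if_pos hck, if_neg hcj, if_pos hck]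
    ring
  · rw [if_neg hck]
    by_cases hcj : c = j
    · rw [if_pos hcj, if_pos hcj]
      ring
    · rw [if_neg hcj, if_neg hcj, if_neg hck]

theorem jumpShift_zero {N : ℕ} (j k : Fin N) (hjk : j ≠ k) (x : Pt N) :
    jumpShift j k 0 x = x := by
  funext c
  rw [jumpShift_apply j k hjk 0 x c]
  split_ifs with h1 h2
  · rw [h1]; ring
  · rw [h2]; ring
  · rfl

theorem jumpShift_continuous {N : ℕ} (j k : Fin N) (hjk : j ≠ k) (x : Pt N) :
    Continuous (fun δ : ℝ => jumpShift j k δ x) := by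
  apply continuous_pi
  intro c
  have heq : (fun δ : ℝ => jumpShift j k δ x c)
      = fun δ : ℝ => if c = k then x k - δ else if c = j then x j + δ else x c := by
    funext δ; rw [jumpShift_apply j k hjk δ x c]
  rw [heq]
  by_cases hck : c = k
  · simp only [if_pos hck]; exact continuous_const.sub continuous_id
  · simp only [if_neg hck]
    by_cases hcj : c = j
    · simp only [if_pos hcj]; exact continuous_const.add continuous_id
    · simp only [if_neg hcj]; exact continuous_const

theorem jump_sum_identity {N : ℕ} (γ : ℝ) (lam : Fin N → ℂ) (hinj : Function.Injective lam)
    (p p' : Fin N) (hpp' : (p : ℕ) + 1 = (p' : ℕ)) (E : Equiv.Perm (Fin N) → ℂ)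
    (hE : ∀ u : Equiv.Perm (Fin N), E (Equiv.swap p p' * u) = E u) :
    ∑ u : Equiv.Perm (Fin N),
      (2 * Complex.I * (lam (u⁻¹ p) - lam (u⁻¹ p')) - 2 * (γ : ℂ)) *
        ((N.factorial : ℂ)⁻¹ * Gcoef γ (fun m => lam (u⁻¹ m)) * E u) = 0 := by
  set s := Equiv.swap p p' with hs
  set K : Equiv.Perm (Fin N) → ℂ := fun u =>
    (2 * Complex.I * (lam (u⁻¹ p) - lam (u⁻¹ p')) - 2 * (γ : ℂ)) *
      ((N.factorial : ℂ)⁻¹ * Gcoef γ (fun m => lam (u⁻¹ m)) * E u) with hK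
  have hre : ∑ u : Equiv.Perm (Fin N), K (s * u) = ∑ u : Equiv.Perm (Fin N), K u :=
    Equiv.sum_comp (Equiv.mulLeft s) K
  have hpoint : ∀ u : Equiv.Perm (Fin N), K u + K (s * u) = 0 := by
    intro u
    set ν : Fin N → ℂ := fun m => lam (u⁻¹ m) with hν
    have hνinj : Function.Injective ν := hinj.comp (u⁻¹ : Equiv.Perm (Fin N)).injective
    have hcomp : ∀ m : Fin N, lam ((s * u)⁻¹ m) = ν (s m) := by
      intro m
      have h1 : (s * u)⁻¹ m = u⁻¹ (s m) := by
        rw [mul_inv_rev, hs, Equiv.swap_inv]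
        rfl
      rw [h1]
    have hfun : (fun m => lam ((s * u)⁻¹ m)) = fun m => ν (s m) := funext hcomp
    have hGid := Gcoef_swap_identity γ ν hνinj p p' hpp'
    rw [← hs] at hGid
    rw [hK]
    simp only [hfun, hcomp, hE u]
    rw [show s p = p' from Equiv.swap_apply_left _ _,
      show s p' = p from Equiv.swap_apply_right _ _]
    have hν0 : (fun m => lam (u⁻¹ m)) = ν := rfl
    rw [hν0]
    linear_combination (2 * Complex.I * (N.factorial : ℂ)⁻¹ * E u) * hGid
      - (2 * (γ:ℂ) * (N.factorial : ℂ)⁻¹ * E u *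
          (Gcoef γ ν + Gcoef γ (fun m => ν (s m)))) * Complex.I_sq
  have h2 : (2 : ℂ) * ∑ u : Equiv.Perm (Fin N), K u = 0 := by
    have := Finset.sum_add_distrib (s := Finset.univ)
      (f := K) (g := fun u => K (s * u))
    rw [hre] at this
    rw [two_mul]
    rw [← this]
    rw [Finset.sum_congr rfl (fun u _ => hpoint u), Finset.sum_const_zero]
  have h2' := mul_eq_zero.mp h2
  rcases h2' with h | h
  · exact absurd h two_ne_zero
  · exact h

open scoped Classical in
theorem jump_main {N : ℕ} (γ : ℝ) (lam : Fin N → ℂ)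
    (hdist : ∀ j k : Fin N, j ≠ k → lam j ≠ lam k) :
    SatisfiesJump γ (Bethe γ lam) := by
  intro j k hjklt x hxjk hreg
  have hjk : j ≠ k := ne_of_lt hjklt
  have hlaminj : Function.Injective lam := by
    intro a b hab
    by_contra h
    exact hdist a b h hab
  have hsub : ∀ a b : Fin N, a ≠ b → x a = x b → (a = j ∧ b = k) ∨ (a = k ∧ b = j) := by
    intro a b hab heq
    rcases lt_or_gt_of_ne hab with h | h
    · by_cases hc : a = j ∧ b = k
      · exact Or.inl hc
      · exact absurd heq (hreg a b h hc)
    · by_cases hc : b = j ∧ a = k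
      · exact Or.inr ⟨hc.2, hc.1⟩
      · exact absurd heq.symm (hreg b a h hc)
  set S := Finset.univ.filter (fun q : Fin N × Fin N => x q.1 ≠ x q.2) with hS
  set δ₀ := if hne : S.Nonempty
    then min ((S.inf' hne fun q => |x q.1 - x q.2|) / 3) 1 else 1 with hδ₀def
  have hδ₀pos : 0 < δ₀ := by
    rw [hδ₀def]
    split_ifs with hne
    · apply lt_min _ one_pos
      apply div_pos _ (by norm_num)
      rw [Finset.lt_inf'_iff]
      intro q hq
      rw [hS, Finset.mem_filter] at hq
      exact abs_pos.mpr (sub_ne_zero.mpr hq.2)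
    · exact one_pos
  have hgap : ∀ a b : Fin N, x a ≠ x b → 3 * δ₀ ≤ |x a - x b| := by
    intro a b hne'
    have hmem : (a, b) ∈ S := by simp [hS, hne']
    have hSne : S.Nonempty := ⟨(a, b), hmem⟩
    rw [hδ₀def, dif_pos hSne]
    have h1 : S.inf' hSne (fun q => |x q.1 - x q.2|) ≤ |x a - x b| :=
      Finset.inf'_le _ hmem
    have h2 : min ((S.inf' hSne fun q => |x q.1 - x q.2|) / 3) 1
        ≤ (S.inf' hSne fun q => |x q.1 - x q.2|) / 3 := min_le_left _ _
    linarith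
  obtain ⟨wp, hwp_mem, hwp_weak, hwp_adj⟩ :=
    jump_alcove j k hjk x hxjk hsub δ₀ hδ₀pos hgap
  have hsub' : ∀ a b : Fin N, a ≠ b → x a = x b → (a = k ∧ b = j) ∨ (a = j ∧ b = k) :=
    fun a b hab heq => (hsub a b hab heq).symm
  obtain ⟨wm, hwm_mem, hwm_weak, hwm_adj⟩ :=
    jump_alcove k j hjk.symm x hxjk.symm hsub' δ₀ hδ₀pos hgap
  have hXp : ∀ m, decRearrange x m = x (wp⁻¹ m) := decR_eq_of_weak x wp hwp_weak
  have hXm : ∀ m, decRearrange x m = x (wm⁻¹ m) := decR_eq_of_weak x wm hwm_weak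
  have hXeq : ∀ m, x (wm⁻¹ m) = x (wp⁻¹ m) := fun m => (hXm m).symm.trans (hXp m)
  set p := wp j with hpdef
  set p' := wp k with hp'def
  have hxwpj : x (wp⁻¹ p) = x j := by rw [hpdef, perm_inv_apply_self']
  have hxwpk : x (wp⁻¹ p') = x k := by rw [hp'def, perm_inv_apply_self']
  have hpne : p ≠ p' := by
    intro h
    rw [Fin.ext_iff] at h
    omega
  -- positions on the minus side
  have hwmk : wm k = p := by
    have h1 : x (wm⁻¹ p) = x j := by rw [hXeq, hxwpj]
    have h2 : x (wm⁻¹ p') = x j := by rw [hXeq, hxwpk, hxjk]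
    have hin1 : wm⁻¹ p = j ∨ wm⁻¹ p = k := by
      by_cases hc : wm⁻¹ p = j
      · exact Or.inl hc
      · rcases hsub _ _ hc h1 with ⟨ha, _⟩ | ⟨ha, _⟩
        · exact absurd ha hc
        · exact Or.inr ha
    have hin2 : wm⁻¹ p' = j ∨ wm⁻¹ p' = k := by
      by_cases hc : wm⁻¹ p' = j
      · exact Or.inl hc
      · rcases hsub _ _ hc h2 with ⟨ha, _⟩ | ⟨ha, _⟩
        · exact absurd ha hc
        · exact Or.inr ha
    rcases hin1 with hc | hc
    · -- wm⁻¹ p = j, so p = wm j; derive contradiction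
      exfalso
      have hpj : p = wm j := by rw [← hc, perm_apply_inv_self']
      have hc2 : wm⁻¹ p' = k := by
        rcases hin2 with hc2 | hc2
        · exfalso
          have : p' = wm j := by rw [← hc2, perm_apply_inv_self']
          exact hpne (by rw [hpj, this])
        · exact hc2
      have hpk : p' = wm k := by rw [← hc2, perm_apply_inv_self']
      rw [← hpj, ← hpk] at hwm_adj
      omega
    · rw [← hc, perm_apply_inv_self']
  have hwmj : wm j = p' := by
    have h2 : x (wm⁻¹ p') = x j := by rw [hXeq, hxwpk, hxjk]
    have hc2 : wm⁻¹ p' = j ∨ wm⁻¹ p' = k := by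
      by_cases hc : wm⁻¹ p' = j
      · exact Or.inl hc
      · rcases hsub _ _ hc h2 with ⟨ha, _⟩ | ⟨ha, _⟩
        · exact absurd ha hc
        · exact Or.inr ha
    rcases hc2 with hc | hc
    · rw [← hc, perm_apply_inv_self']
    · exfalso
      have h3 : p' = wm k := by rw [← hc, perm_apply_inv_self']
      rw [hwmk] at h3
      exact hpne h3.symm
  -- continue
  set c₀ : Equiv.Perm (Fin N) → ℂ :=
    fun u => (N.factorial : ℂ)⁻¹ * Gcoef γ (fun m => lam (u⁻¹ m)) with hc₀
  have hBp : ∀ y ∈ alcove wp, Bethe γ lam y = ES lam wp c₀ y := fun y hy =>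
    Bethe_eq_ES γ lam wp y (fun i i' h => le_of_lt (hy i i' h))
  have hBm : ∀ y ∈ alcove wm, Bethe γ lam y = ES lam wm c₀ y := fun y hy =>
    Bethe_eq_ES γ lam wm y (fun i i' h => le_of_lt (hy i i' h))
  have hpdp : ∀ q : Fin N, ∀ y ∈ alcove wp,
      pd q (Bethe γ lam) y = ES lam wp (fun u => Complex.I * lam (u⁻¹ (wp q)) * c₀ u) y := by
    intro q y hy
    rw [pd_locality _ _ _ (alcove_open wp) hBp q y hy, pd_ES]
  have hpdm : ∀ q : Fin N, ∀ y ∈ alcove wm,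
      pd q (Bethe γ lam) y = ES lam wm (fun u => Complex.I * lam (u⁻¹ (wm q)) * c₀ u) y := by
    intro q y hy
    rw [pd_locality _ _ _ (alcove_open wm) hBm q y hy, pd_ES]
  set Φ : ℝ → ℂ := fun δ =>
    (ES lam wp (fun u => Complex.I * lam (u⁻¹ p) * c₀ u) (jumpShift j k δ x)
      - ES lam wp (fun u => Complex.I * lam (u⁻¹ p') * c₀ u) (jumpShift j k δ x))
    - (ES lam wm (fun u => Complex.I * lam (u⁻¹ p') * c₀ u) (jumpShift k j δ x)
      - ES lam wm (fun u => Complex.I * lam (u⁻¹ p) * c₀ u) (jumpShift k j δ x)) with hΦ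
  have hΦcont : Continuous Φ := by
    rw [hΦ]
    have h1 := jumpShift_continuous j k hjk x
    have h2 := jumpShift_continuous k j hjk.symm x
    refine Continuous.sub (Continuous.sub ?_ ?_) (Continuous.sub ?_ ?_) <;>
      exact ((ES_contDiff _ _ _).continuous).comp (by assumption)
  have hEVeq : (fun δ : ℝ =>
      (pd j (Bethe γ lam) (jumpShift j k δ x) - pd k (Bethe γ lam) (jumpShift j k δ x))
        - (pd j (Bethe γ lam) (jumpShift j k (-δ) x)
          - pd k (Bethe γ lam) (jumpShift j k (-δ) x)))
      =ᶠ[nhdsWithin 0 (Set.Ioi 0)] Φ := by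
    filter_upwards [Ioo_mem_nhdsGT_of_mem (Set.mem_Ico.mpr ⟨le_refl (0:ℝ), hδ₀pos⟩)]
      with δ hδ
    obtain ⟨hδ1, hδ2⟩ := Set.mem_Ioo.mp hδ
    have hyp : jumpShift j k δ x ∈ alcove wp := hwp_mem δ hδ1 hδ2
    have hym : jumpShift k j δ x ∈ alcove wm := hwm_mem δ hδ1 hδ2
    rw [hΦ]
    rw [jumpShift_neg j k hjk δ x]
    rw [hpdp j _ hyp, hpdp k _ hyp, hpdm j _ hym, hpdm k _ hym,
      ← hpdef, ← hp'def, hwmj, hwmk]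
  have htendsto : Filter.Tendsto Φ (nhdsWithin 0 (Set.Ioi 0)) (nhds (Φ 0)) :=
    (hΦcont.continuousAt.tendsto).mono_left nhdsWithin_le_nhds
  have hΦ0 : Φ 0 = 2 * (γ : ℂ) * Bethe γ lam x := by
    have hz1 : jumpShift j k 0 x = x := jumpShift_zero j k hjk x
    have hz2 : jumpShift k j 0 x = x := jumpShift_zero k j hjk.symm x
    rw [hΦ]
    simp only [hz1, hz2]
    -- rewrite Bethe at the wall point
    have hBx : Bethe γ lam x = ES lam wp c₀ x :=
      Bethe_eq_ES γ lam wp x hwp_weak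
    rw [hBx]
    -- E is the same for wm and wp
    have hESm : ∀ c : Equiv.Perm (Fin N) → ℂ, ES lam wm c x = ES lam wp c x := by
      intro c
      unfold ES
      refine Finset.sum_congr rfl (fun u _ => ?_)
      have hxx : (∑ m, lam (u⁻¹ m) * ((x (wm⁻¹ m) : ℝ) : ℂ))
          = ∑ m, lam (u⁻¹ m) * ((x (wp⁻¹ m) : ℝ) : ℂ) :=
        Finset.sum_congr rfl (fun m _ => by rw [hXeq m])
      rw [hxx]
    rw [hESm, hESm]
    -- now everything is a sum over u of terms with common E u
    unfold ES
    rw [← sub_eq_zero]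
    have hsplit : ∀ f1 f2 f3 f4 : Equiv.Perm (Fin N) → ℂ,
        ((∑ u : Equiv.Perm (Fin N), f1 u) - ∑ u : Equiv.Perm (Fin N), f2 u)
          - ((∑ u : Equiv.Perm (Fin N), f3 u) - ∑ u : Equiv.Perm (Fin N), f4 u)
          - 2 * (γ : ℂ) * ∑ u : Equiv.Perm (Fin N),
              c₀ u * Complex.exp (Complex.I * ∑ m, lam (u⁻¹ m) * ((x (wp⁻¹ m) : ℝ) : ℂ))
        = ∑ u : Equiv.Perm (Fin N), (f1 u - f2 u - (f3 u - f4 u)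
            - 2 * (γ : ℂ) * (c₀ u * Complex.exp (Complex.I *
              ∑ m, lam (u⁻¹ m) * ((x (wp⁻¹ m) : ℝ) : ℂ)))) := by
      intro f1 f2 f3 f4
      rw [Finset.mul_sum]
      simp [Finset.sum_sub_distrib]
    rw [hsplit]
    have hfinal := jump_sum_identity γ lam hlaminj p p' hwp_adj
      (fun u => Complex.exp (Complex.I * ∑ m, lam (u⁻¹ m) * ((x (wp⁻¹ m) : ℝ) : ℂ)))
      (by
        intro u
        show Complex.exp (Complex.I *
            ∑ m, lam ((Equiv.swap p p' * u)⁻¹ m) * ((x (wp⁻¹ m) : ℝ) : ℂ))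
          = Complex.exp (Complex.I * ∑ m, lam (u⁻¹ m) * ((x (wp⁻¹ m) : ℝ) : ℂ))
        have hcomp : ∀ m : Fin N, lam ((Equiv.swap p p' * u)⁻¹ m)
            = lam (u⁻¹ (Equiv.swap p p' m)) := fun m => by
          congr 1
        have hXswap : ∀ m : Fin N,
            ((x (wp⁻¹ (Equiv.swap p p' m)) : ℝ) : ℂ) = ((x (wp⁻¹ m) : ℝ) : ℂ) := by
          intro m
          by_cases hm : m = p
          · rw [hm, Equiv.swap_apply_left]
            rw [hxwpk, hxwpj, hxjk]
          · by_cases hm' : m = p'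
            · rw [hm', Equiv.swap_apply_right]
              rw [hxwpk, hxwpj, hxjk]
            · rw [Equiv.swap_apply_of_ne_of_ne hm hm']
        have hsum : (∑ m, lam ((Equiv.swap p p' * u)⁻¹ m) * ((x (wp⁻¹ m) : ℝ) : ℂ))
            = ∑ m, lam (u⁻¹ m) * ((x (wp⁻¹ m) : ℝ) : ℂ) :=
          calc ∑ m, lam ((Equiv.swap p p' * u)⁻¹ m) * ((x (wp⁻¹ m) : ℝ) : ℂ)
              = ∑ m, lam (u⁻¹ (Equiv.swap p p' m)) *
                  ((x (wp⁻¹ (Equiv.swap p p' m)) : ℝ) : ℂ) := by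
                refine Finset.sum_congr rfl (fun m _ => ?_)
                rw [hcomp m, hXswap m]
            _ = ∑ m, lam (u⁻¹ m) * ((x (wp⁻¹ m) : ℝ) : ℂ) :=
                Equiv.sum_comp (Equiv.swap p p')
                  (fun m => lam (u⁻¹ m) * ((x (wp⁻¹ m) : ℝ) : ℂ))
        rw [hsum])
    rw [← hfinal]
    refine Finset.sum_congr rfl (fun u _ => ?_)
    rw [hc₀]
    ring
  rw [← hΦ0]
  exact htendsto.congr' hEVeq.symm


end MyLemmas

/-- for `λ` with pairwise distinct entries, the Bethe wavefunction `Ψ_λ` is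
continuous, `S_N`-invariant, smooth on every alcove, satisfies the Helmholtz equation
with eigenvalue `∑_j λ_j²` on the regular vectors, and satisfies the derivative jump
conditions with coupling `γ`. -/
theorem statement_7 (N : ℕ) (hN : 1 ≤ N) (γ : ℝ) (lam : Fin N → ℂ)
    (hdist : ∀ j k : Fin N, j ≠ k → lam j ≠ lam k) :
    Continuous (Bethe γ lam) ∧
    (∀ (w : Equiv.Perm (Fin N)) (x : Pt N), Bethe γ lam (permPt w x) = Bethe γ lam x) ∧
    (∀ w : Equiv.Perm (Fin N), ContDiffOn ℝ (⊤ : ℕ∞) (Bethe γ lam) (alcove w)) ∧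
    (∀ x ∈ regPts N,
      -(∑ j : Fin N, pd j (pd j (Bethe γ lam)) x)
        = (∑ j : Fin N, (lam j) ^ 2) * Bethe γ lam x) ∧
    SatisfiesJump γ (Bethe γ lam) := by
  refine ⟨?_, ?_, ?_, ?_, ?_⟩
  · -- continuity
    unfold Bethe
    apply Continuous.mul continuous_const
    apply continuous_finset_sum
    intro u _
    apply Continuous.mul continuous_const
    apply Continuous.cexp
    apply Continuous.mul continuous_const
    apply continuous_finset_sum
    intro m _
    exact continuous_const.mul (Complex.continuous_ofReal.comp (decR_coord_continuous m))
  · -- invariance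
    intro w x
    unfold Bethe
    rw [decR_permPt w x]
  · -- smoothness on alcoves
    intro w
    refine (ES_contDiff lam w
      (fun u => (N.factorial : ℂ)⁻¹ * Gcoef γ (fun j => lam (u⁻¹ j)))).contDiffOn.congr ?_
    intro y hy
    exact Bethe_eq_ES γ lam w y (fun i i' h => le_of_lt (hy i i' h))
  · -- Helmholtz
    intro x hx
    exact helmholtz_lemma γ lam x hx
  · exact jump_main γ lam hdist


end
end

section
/- Fix an integer N ≥ 1, γ ∈ ℝ, μ ∈ ℂ, n ∈ {0, …, N}, and a tuple i = (i_1, …, i_n) of pairwise distinct elements of {1, …, N}. Then, with the convention that a transposition t of coordinates acts on functions g on ℝ^{N+1} by (t g)(x) = g(t x), one has the operator identity ê^+_{μ;i} = s_{1,2} ∘ s_{2,3} ∘ ⋯ ∘ s_{N,N+1} ∘ s_{i_1,i_2} ∘ s_{i_2,i_3} ∘ ⋯ ∘ s_{i_{n−1},i_n} ∘ s_{i_n,N+1} ∘ ê^-_{μ;i} on continuous functions ℝ^N → ℂ (for n = 0 the second block of transpositions is empty). -/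
open scoped BigOperators
open MeasureTheory Complex

noncomputable section

/-! ### Auxiliary lemmas for statement 8 -/

lemma adj_prod_fix {M : ℕ} : ∀ (L : List (Fin M)) {j : Fin M}, j ∉ L → (adjSwaps L).prod j = j
  | [], _, _ => rfl
  | [_], _, _ => rfl
  | a :: b :: rest, j, hj => by
      simp only [adjSwaps, List.prod_cons, Equiv.Perm.mul_apply]
      rw [adj_prod_fix (b :: rest) (by simp at hj ⊢; tauto)]
      exact Equiv.swap_apply_of_ne_of_ne (by simp at hj; tauto) (by simp at hj; tauto)

lemma adj_prod_get {M : ℕ} : ∀ (L : List (Fin M)), L.Nodup → ∀ (m : ℕ)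
    (h2 : m + 1 < L.length),
    (adjSwaps L).prod (L[m]'(by omega)) = L[m+1]'h2
  | [], _, m, h2 => by simp at h2
  | [_], _, m, h2 => by simp at h2
  | a :: b :: rest, hL, 0, h2 => by
      simp only [adjSwaps, List.prod_cons, Equiv.Perm.mul_apply, List.getElem_cons_zero,
        List.getElem_cons_succ]
      rw [adj_prod_fix (b :: rest) hL.notMem]
      exact Equiv.swap_apply_left a b
  | a :: b :: rest, hL, m + 1, h2 => by
      simp only [adjSwaps, List.prod_cons, Equiv.Perm.mul_apply, List.getElem_cons_succ]
      rw [adj_prod_get (b :: rest) hL.of_cons m (by simpa using h2)]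
      have hmem : (b :: rest)[m+1]'(by simpa using h2) ∈ b :: rest := List.getElem_mem _
      have hne1 : (b :: rest)[m+1]'(by simpa using h2) ≠ a :=
        fun h => hL.notMem (h ▸ hmem)
      have hne2 : (b :: rest)[m+1]'(by simpa using h2) ≠ b := by
        intro h
        have : m + 1 = 0 := (List.Nodup.getElem_inj_iff hL.of_cons
          (i := m+1) (hi := by simpa using h2) (j := 0) (hj := by simp)).mp (by simpa using h)
        omega
      exact Equiv.swap_apply_of_ne_of_ne hne1 hne2

lemma adj_prod_last {M : ℕ} : ∀ (L : List (Fin M)), L.Nodup → ∀ (h : 0 < L.length),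
    (adjSwaps L).prod (L[L.length - 1]'(by omega)) = L[0]'h
  | [], _, h => by simp at h
  | [a], _, h => rfl
  | a :: b :: rest, hL, h => by
      simp only [adjSwaps, List.prod_cons, Equiv.Perm.mul_apply]
      have hlen : (a :: b :: rest).length - 1 = ((b :: rest).length - 1) + 1 := by
        simp
      have heq : (a :: b :: rest)[(a :: b :: rest).length - 1]'(by omega)
          = (b :: rest)[(b :: rest).length - 1]'(by simp) := by
        simp only [hlen, List.getElem_cons_succ]
      rw [heq, adj_prod_last (b :: rest) hL.of_cons (by simp)]
      simp [Equiv.swap_apply_right]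

lemma adjSwaps_length {M : ℕ} : ∀ (L : List (Fin M)), (adjSwaps L).length = L.length - 1
  | [] => rfl
  | [_] => rfl
  | a :: b :: rest => by
      simp only [adjSwaps, List.length_cons, adjSwaps_length (b :: rest)]
      simp

lemma adjSwaps_getElem {M : ℕ} : ∀ (L : List (Fin M)) (m : ℕ) (h : m + 1 < L.length),
    (adjSwaps L)[m]'(by rw [adjSwaps_length]; omega)
      = Equiv.swap (L[m]'(by omega)) (L[m+1]'h)
  | [], m, h => by simp at h
  | [_], m, h => by simp at h
  | a :: b :: rest, 0, h => rfl
  | a :: b :: rest, m + 1, h => by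
      simp only [adjSwaps, List.getElem_cons_succ]
      rw [adjSwaps_getElem (b :: rest) m (by simpa using h)]
      simp

lemma ofFn_swap_eq {N : ℕ} :
    (List.ofFn fun k : Fin N => Equiv.swap k.castSucc k.succ)
      = adjSwaps (List.finRange (N + 1)) := by
  apply List.ext_getElem
  · rw [adjSwaps_length]; simp
  · intro m h1 h2
    have hm : m + 1 < (List.finRange (N+1)).length := by
      simp at h1 ⊢; omega
    rw [List.getElem_ofFn, adjSwaps_getElem _ m hm]
    congr 1 <;>
      · rw [List.getElem_finRange]
        ext
        simp [Fin.castSucc, Fin.succ]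

/-- The cycle `j ↦ j+1` as the product appearing in statement 8. -/
def CPerm (N : ℕ) : Equiv.Perm (Fin (N + 1)) :=
  (List.ofFn fun k : Fin N => Equiv.swap k.castSucc k.succ).prod

lemma CPerm_castSucc {N : ℕ} (k : Fin N) : CPerm N k.castSucc = k.succ := by
  rw [CPerm, ofFn_swap_eq]
  have h2 : (k : ℕ) + 1 < (List.finRange (N+1)).length := by simp only [List.length_finRange, List.length_append, List.length_map, List.length_cons, List.length_singleton, List.length_nil]; omega
  have h0 : k.castSucc = (List.finRange (N+1))[(k : ℕ)]'(by simp only [List.length_finRange, List.length_append, List.length_map, List.length_cons, List.length_singleton, List.length_nil]; omega) := by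
    rw [List.getElem_finRange]; ext; simp
  rw [h0, adj_prod_get _ (List.nodup_finRange _) _ h2, List.getElem_finRange]
  ext; simp

lemma CPerm_last {N : ℕ} : CPerm N (Fin.last N) = 0 := by
  rw [CPerm, ofFn_swap_eq]
  have h0 : Fin.last N
      = (List.finRange (N+1))[(List.finRange (N+1)).length - 1]'(by simp) := by
    rw [List.getElem_finRange]; ext; simp
  rw [h0, adj_prod_last _ (List.nodup_finRange _) (by simp), List.getElem_finRange]
  ext; simp

/-- `x_{i₁+1}` for `l = i₁ :: …`, and `x_1` for `l = []`. -/
def firstX {N : ℕ} (x : Pt (N + 1)) : List (Fin N) → ℝ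
  | [] => x 0
  | i :: _ => x i.succ

lemma exp_sub_split (μ : ℂ) (c y : ℝ) :
    Complex.exp (Complex.I * μ * ((c - y : ℝ) : ℂ))
      = Complex.exp (Complex.I * μ * (c : ℂ)) * Complex.exp (-(Complex.I * μ * (y : ℂ))) := by
  rw [← Complex.exp_add]
  congr 1
  push_cast
  ring

lemma aux_main {N : ℕ} (μ : ℂ) (f : Fn N) (x x' : Pt (N + 1)) :
    ∀ (l : List (Fin N)),
      (∀ pre i rest, l = pre ++ i :: rest → x' i.castSucc = firstX x rest) →
      ∀ z z' : Pt N, (∀ j, j ∉ l → z j = z' j) →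
      Complex.exp (Complex.I * μ * ((firstX x l : ℝ) : ℂ)) *
          eMinusAux μ f x' l (firstX x l) z
        = Complex.exp (Complex.I * μ * ((x 0 : ℝ) : ℂ)) * ePlusAux μ f x l z'
  | [], _, z, z', hz => by
      have hzz : z = z' := funext fun j => hz j (by simp)
      simp [eMinusAux, ePlusAux, firstX, hzz]
  | i :: rest, H, z, z', hz => by
      have hx'i : x' i.castSucc = firstX x rest := H [] i rest rfl
      have H' : ∀ pre j r, rest = pre ++ j :: r → x' j.castSucc = firstX x r :=
        fun pre j r h => H (i :: pre) j r (by rw [h]; rfl)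
      have hfr : (match rest with | [] => x 0 | j :: _ => x j.succ) = firstX x rest := by
        cases rest <;> rfl
      have hfl : firstX x (i :: rest) = x i.succ := rfl
      have hz' : ∀ y : ℝ, ∀ j, j ∉ rest →
          Function.update z i y j = Function.update z' i y j := by
        intro y j hj
        rcases eq_or_ne j i with rfl | h
        · simp
        · rw [Function.update_of_ne h, Function.update_of_ne h]
          exact hz j (by simp [hj, h])
      have hInt1 : ∀ y : ℝ,
          Complex.exp (Complex.I * μ * ((firstX x rest - y : ℝ) : ℂ)) *
              eMinusAux μ f x' rest (firstX x rest) (Function.update z i y)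
            = Complex.exp (Complex.I * μ * ((x 0 : ℝ) : ℂ)) *
                (Complex.exp (-(Complex.I * μ * (y : ℂ))) *
                  ePlusAux μ f x rest (Function.update z' i y)) := by
        intro y
        have hIH := aux_main μ f x x' rest H' (Function.update z i y)
          (Function.update z' i y) (hz' y)
        rw [exp_sub_split, mul_comm (Complex.exp (Complex.I * μ * ((firstX x rest : ℝ) : ℂ)))
          (Complex.exp _), mul_assoc, hIH]
        ring
      have hInt2 : ∀ y : ℝ,
          Complex.exp (Complex.I * μ * ((x i.succ - y : ℝ) : ℂ)) *
              ePlusAux μ f x rest (Function.update z' i y)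
            = Complex.exp (Complex.I * μ * ((x i.succ : ℝ) : ℂ)) *
                (Complex.exp (-(Complex.I * μ * (y : ℂ))) *
                  ePlusAux μ f x rest (Function.update z' i y)) := by
        intro y
        rw [exp_sub_split, mul_assoc]
      simp only [eMinusAux, ePlusAux, hfr, hfl, hx'i]
      rw [intervalIntegral.integral_congr (g := fun y =>
            Complex.exp (Complex.I * μ * ((x 0 : ℝ) : ℂ)) *
              (Complex.exp (-(Complex.I * μ * (y : ℂ))) *
                ePlusAux μ f x rest (Function.update z' i y))) (fun y _ => hInt1 y),
          intervalIntegral.integral_congr (g := fun y =>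
            Complex.exp (Complex.I * μ * ((x i.succ : ℝ) : ℂ)) *
              (Complex.exp (-(Complex.I * μ * (y : ℂ))) *
                ePlusAux μ f x rest (Function.update z' i y))) (fun y _ => hInt2 y),
          intervalIntegral.integral_const_mul, intervalIntegral.integral_const_mul]
      cases rest with
      | nil => simp only [firstX]; ring
      | cons j r' => simp only [firstX]; ring

lemma list_eq_aux {N : ℕ} (x x' : Pt (N + 1)) :
    ∀ l : List (Fin N),
      (∀ pre i rest, l = pre ++ i :: rest → x' i.castSucc = firstX x rest) →
      (firstX x l : ℝ) :: l.map (fun i => x' i.castSucc)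
        = l.map (fun i => x i.succ) ++ [x 0]
  | [], _ => rfl
  | i :: rest, H => by
      have h0 : x' i.castSucc = firstX x rest := H [] i rest rfl
      have htail := list_eq_aux x x' rest (fun pre j r h => H (i :: pre) j r (by rw [h]; rfl))
      simp only [List.map_cons, List.cons_append]
      rw [show firstX x (i :: rest) = x i.succ from rfl, h0]
      exact congrArg _ htail


def firstIdx {N : ℕ} : List (Fin N) → Fin (N + 1)
  | [] => 0
  | i :: _ => i.succ

lemma x_firstIdx {N : ℕ} (x : Pt (N + 1)) (rest : List (Fin N)) :
    x (firstIdx rest) = firstX x rest := by cases rest <;> rfl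

def sigmaPerm {N : ℕ} (l : List (Fin N)) : Equiv.Perm (Fin (N + 1)) :=
  CPerm N * (adjSwaps (l.map Fin.castSucc ++ [Fin.last N])).prod

lemma nodup_L' {N : ℕ} (l : List (Fin N)) (hl : l.Nodup) :
    (l.map Fin.castSucc ++ [Fin.last N]).Nodup := by
  rw [List.nodup_append]
  refine ⟨hl.map (Fin.castSucc_injective N), List.nodup_singleton _, ?_⟩
  intro a ha
  simp only [List.mem_map] at ha
  obtain ⟨k, _, rfl⟩ := ha
  simp [(Fin.castSucc_lt_last k).ne]

lemma sigma_not_mem {N : ℕ} (l : List (Fin N)) (k : Fin N) (hk : k ∉ l) :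
    sigmaPerm l k.castSucc = k.succ := by
  have hnm : k.castSucc ∉ l.map Fin.castSucc ++ [Fin.last N] := by
    simp only [List.mem_append, List.mem_map, List.mem_singleton]
    push_neg
    exact ⟨fun j hj hcast => hk ((Fin.castSucc_injective N hcast) ▸ hj),
      (Fin.castSucc_lt_last k).ne⟩
  rw [sigmaPerm, Equiv.Perm.mul_apply, adj_prod_fix _ hnm, CPerm_castSucc]

lemma sigma_last {N : ℕ} (l : List (Fin N)) (hl : l.Nodup) :
    sigmaPerm l (Fin.last N) = firstIdx l := by
  have h1 : (l.map Fin.castSucc ++ [Fin.last N])[(l.map Fin.castSucc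
      ++ [Fin.last N]).length - 1]'(by simp) = Fin.last N := by
    rw [List.getElem_append_right (by simp)]
    simp
  have h2 := adj_prod_last (l.map Fin.castSucc ++ [Fin.last N]) (nodup_L' l hl) (by simp)
  rw [h1] at h2
  rw [sigmaPerm, Equiv.Perm.mul_apply, h2]
  cases l with
  | nil => simpa [firstIdx] using CPerm_last
  | cons i rest =>
      rw [List.getElem_append_left (by simp), List.getElem_map]
      simpa [firstIdx] using CPerm_castSucc i

lemma sigma_mid {N : ℕ} (l : List (Fin N)) (hl : l.Nodup) (pre : List (Fin N))
    (i : Fin N) (rest : List (Fin N)) (h : l = pre ++ i :: rest) :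
    sigmaPerm l i.castSucc = firstIdx rest := by
  subst h
  have h0 : ((pre ++ i :: rest).map Fin.castSucc ++ [Fin.last N])[pre.length]'(by
      simp only [List.length_finRange, List.length_append, List.length_map, List.length_cons, List.length_singleton, List.length_nil]; omega) = i.castSucc := by
    rw [List.getElem_append_left (by simp only [List.length_finRange, List.length_append, List.length_map, List.length_cons, List.length_singleton, List.length_nil]; omega), List.getElem_map]
    congr 1
    rw [List.getElem_append_right (le_refl _)]
    simp
  have key := adj_prod_get ((pre ++ i :: rest).map Fin.castSucc ++ [Fin.last N])
    (nodup_L' _ hl) pre.length (by simp only [List.length_finRange, List.length_append, List.length_map, List.length_cons, List.length_singleton, List.length_nil]; omega)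
  rw [h0] at key
  rw [sigmaPerm, Equiv.Perm.mul_apply, key]
  cases rest with
  | nil =>
      rw [List.getElem_append_right (by simp)]
      simpa [firstIdx] using CPerm_last
  | cons j rest' =>
      rw [List.getElem_append_left (by simp only [List.length_finRange, List.length_append, List.length_map, List.length_cons, List.length_singleton, List.length_nil]; omega), List.getElem_map]
      have : (pre ++ i :: j :: rest')[pre.length + 1]'(by simp only [List.length_finRange, List.length_append, List.length_map, List.length_cons, List.length_singleton, List.length_nil]; omega) = j := by
        rw [List.getElem_append_right (by omega)]
        simp
      rw [this]
      simpa [firstIdx] using CPerm_castSucc j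

/-- `ê⁺_{μ;i} = s_{1,2} ∘ ⋯ ∘ s_{N,N+1} ∘ s_{i₁,i₂} ∘ ⋯ ∘ s_{i_n,N+1} ∘ ê⁻_{μ;i}`,
where a transposition `t` acts on functions `g` on `ℝ^{N+1}` by `(t g)(x) = g(t x)`.
Unwinding that convention, the composite of the transposition operators applied to
`ê⁻_{μ;i} f` evaluated at `x` is `(ê⁻_{μ;i} f)(x ∘ σ)` with
`σ = s_{1,2} ⋯ s_{N,N+1} s_{i₁,i₂} ⋯ s_{i_n,N+1}` (product of permutations). -/
theorem statement_8 (N : ℕ) (hN : 1 ≤ N) (γ : ℝ) (μ : ℂ)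
    (l : List (Fin N)) (hl : l.Nodup) (f : Fn N) (hf : Continuous f) (x : Pt (N + 1)) :
    ehatPlus μ l f x =
      ehatMinus μ l f (fun j =>
        x ((((List.ofFn fun k : Fin N => Equiv.swap k.castSucc k.succ).prod *
              (adjSwaps (l.map Fin.castSucc ++ [Fin.last N])).prod)) j)) := by
  classical
  show ehatPlus μ l f x = ehatMinus μ l f (fun j => x (sigmaPerm l j))
  set x' : Pt (N + 1) := fun j => x (sigmaPerm l j) with hx'
  have H : ∀ pre i rest, l = pre ++ i :: rest → x' i.castSucc = firstX x rest := by
    intro pre i rest h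
    show x (sigmaPerm l i.castSucc) = firstX x rest
    rw [sigma_mid l hl pre i rest h]
    exact x_firstIdx x rest
  have hlast : x' (Fin.last N) = firstX x l := by
    show x (sigmaPerm l (Fin.last N)) = firstX x l
    rw [sigma_last l hl]
    exact x_firstIdx x l
  have hz : ∀ j : Fin N, j ∉ l → x' j.castSucc = x j.succ := by
    intro j hj
    show x (sigmaPerm l j.castSucc) = x j.succ
    rw [sigma_not_mem l j hj]
  have hmain := aux_main μ f x x' l H (fun j => x' j.castSucc) (fun j => x j.succ) hz
  simp only [ehatPlus, ehatMinus]
  rw [hlast, list_eq_aux x x' l H]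
  rw [mul_assoc (chainInd _), mul_assoc (chainInd _), hmain]

end
end

section
/- Fix an integer N ≥ 1, γ ∈ ℝ and μ ∈ ℂ. Then for every f ∈ CB^∞(ℝ^N) and every ε ∈ {+, −}, S_{N+1}(b^ε_μ f) = S_{N+1}(b^-_μ(S_N f)) as functions on ℝ^{N+1}; in particular S_{N+1}(b^+_μ f) = S_{N+1}(b^-_μ f), and the symmetrized creation operator B_μ := S_{N+1} ∘ b^-_μ restricted to S_N-invariant functions satisfies S_{N+1} ∘ b^ε_μ = B_μ ∘ S_N. -/
open scoped BigOperators
open MeasureTheory Complex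

noncomputable section

section AuxLemmas

open Complex

variable {N : ℕ} {μ : ℂ} {γ : ℝ}

/-- Lift a permutation of `Fin N` to `Fin (N+1)`, fixing `Fin.last N`. -/
def liftP {N : ℕ} (w : Equiv.Perm (Fin N)) : Equiv.Perm (Fin (N + 1)) :=
  (finSuccEquivLast.trans (Equiv.optionCongr w)).trans finSuccEquivLast.symm

@[simp] lemma liftP_castSucc (w : Equiv.Perm (Fin N)) (i : Fin N) :
    liftP w i.castSucc = (w i).castSucc := by
  simp [liftP]

@[simp] lemma liftP_last (w : Equiv.Perm (Fin N)) :
    liftP w (Fin.last N) = Fin.last N := by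
  simp [liftP]

lemma eMinusAux_comp (w : Equiv.Perm (Fin N)) (f : Fn N) (x : Pt (N + 1)) :
    ∀ (l : List (Fin N)) (ub : ℝ) (z : Pt N),
      eMinusAux μ (fun z' => f (z' ∘ ⇑w)) x l ub z
        = eMinusAux μ f (x ∘ ⇑(liftP w)) (l.map ⇑w⁻¹) ub (z ∘ ⇑w)
  | [], ub, z => rfl
  | i :: rest, ub, z => by
    simp only [eMinusAux, List.map_cons]
    have hx : (x ∘ ⇑(liftP w)) ((w⁻¹ i).castSucc) = x i.castSucc := by
      simp [Function.comp]
    rw [hx]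
    have : (fun y => Complex.exp (Complex.I * μ * ((x i.castSucc - y : ℝ) : ℂ)) *
          eMinusAux μ (fun z' => f (z' ∘ ⇑w)) x rest (x i.castSucc) (Function.update z i y))
        = fun y => Complex.exp (Complex.I * μ * ((x i.castSucc - y : ℝ) : ℂ)) *
          eMinusAux μ f (x ∘ ⇑(liftP w)) (rest.map ⇑w⁻¹) (x i.castSucc)
            (Function.update (z ∘ ⇑w) (w⁻¹ i) y) := by
      funext y
      rw [eMinusAux_comp w f x rest (x i.castSucc) (Function.update z i y)]
      congr 1
      have h2 : Function.update z (w (w⁻¹ i)) y ∘ ⇑w = Function.update (z ∘ ⇑w) (w⁻¹ i) y :=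
        Function.update_comp_eq_of_injective z w.injective (w⁻¹ i) y
      rw [show w (w⁻¹ i) = i from w.apply_symm_apply i] at h2
      rw [h2]
    rw [this]

lemma ehatMinus_comp (w : Equiv.Perm (Fin N)) (f : Fn N) (x : Pt (N + 1)) (l : List (Fin N)) :
    ehatMinus μ l (fun z => f (z ∘ ⇑w)) x = ehatMinus μ (l.map ⇑w⁻¹) f (x ∘ ⇑(liftP w)) := by
  simp only [ehatMinus]
  have h1 : (l.map ⇑w⁻¹).map (fun i => (x ∘ ⇑(liftP w)) i.castSucc)
      = l.map (fun i => x i.castSucc) := by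
    rw [List.map_map]
    refine List.map_congr_left fun i _ => ?_
    simp [Function.comp]
  have h2 : (x ∘ ⇑(liftP w)) (Fin.last N) = x (Fin.last N) := by simp [Function.comp]
  rw [h1, h2, eMinusAux_comp w f x l (x (Fin.last N)) (fun j => x j.castSucc)]
  congr 2
  funext j
  simp [Function.comp]

lemma bMinus_comp (w : Equiv.Perm (Fin N)) (f : Fn N) (x : Pt (N + 1)) :
    bMinus γ μ (fun z => f (z ∘ ⇑w)) x = bMinus γ μ f (x ∘ ⇑(liftP w)) := by
  simp only [bMinus]
  refine Finset.sum_congr rfl fun n _ => ?_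
  congr 1
  refine Fintype.sum_equiv (Equiv.embeddingCongr (Equiv.refl (Fin n)) w⁻¹) _ _ fun e => ?_
  rw [ehatMinus_comp w f x (List.ofFn ⇑e)]
  have hco : ⇑(Equiv.embeddingCongr (Equiv.refl (Fin n)) w⁻¹ e) = ⇑w⁻¹ ∘ ⇑e := by
    funext j; simp [Equiv.embeddingCongr]
  rw [List.map_ofFn, hco]

lemma continuous_eMinusAux (f : Fn N) (hf : Continuous f) (x : Pt (N + 1)) (l : List (Fin N)) :
    ∀ ub : ℝ, Continuous fun z : Pt N => eMinusAux μ f x l ub z := by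
  induction l with
  | nil => intro ub; exact hf
  | cons i rest ih =>
    intro ub
    simp only [eMinusAux]
    apply intervalIntegral.continuous_parametric_intervalIntegral_of_continuous'
    unfold Function.uncurry
    apply Continuous.mul
    · apply Complex.continuous_exp.comp
      apply Continuous.mul continuous_const
      exact Complex.continuous_ofReal.comp (continuous_const.sub continuous_snd)
    · exact (ih (x i.castSucc)).comp (continuous_update i)

lemma eMinusAux_sum {ι : Type} [Fintype ι] (F : ι → Fn N) (hF : ∀ i, Continuous (F i)) (c : ℂ)
    (x : Pt (N + 1)) (l : List (Fin N)) :
    ∀ (ub : ℝ) (z : Pt N),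
      eMinusAux μ (fun z' => c * ∑ i, F i z') x l ub z
        = c * ∑ i, eMinusAux μ (F i) x l ub z := by
  induction l with
  | nil => intro ub z; rfl
  | cons i rest ih =>
    intro ub z
    simp only [eMinusAux]
    have h1 : (fun y => Complex.exp (Complex.I * μ * ((x i.castSucc - y : ℝ) : ℂ)) *
          eMinusAux μ (fun z' => c * ∑ j, F j z') x rest (x i.castSucc) (Function.update z i y))
        = fun y => ∑ j, c * (Complex.exp (Complex.I * μ * ((x i.castSucc - y : ℝ) : ℂ)) *
          eMinusAux μ (F j) x rest (x i.castSucc) (Function.update z i y)) := by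
      funext y
      rw [ih, Finset.mul_sum, Finset.mul_sum]
      exact Finset.sum_congr rfl fun j _ => by ring
    rw [h1, intervalIntegral.integral_finset_sum]
    · rw [Finset.mul_sum]
      refine Finset.sum_congr rfl fun j _ => ?_
      rw [intervalIntegral.integral_const_mul]
    · intro j _
      apply Continuous.intervalIntegrable
      apply Continuous.mul continuous_const
      apply Continuous.mul
      · apply Complex.continuous_exp.comp
        apply Continuous.mul continuous_const
        exact Complex.continuous_ofReal.comp (continuous_const.sub continuous_id)
      · exact (continuous_eMinusAux (F j) (hF j) x rest (x i.castSucc)).comp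
          ((continuous_const.update i continuous_id))

lemma ehatMinus_sum {ι : Type} [Fintype ι] (F : ι → Fn N) (hF : ∀ i, Continuous (F i)) (c : ℂ)
    (x : Pt (N + 1)) (l : List (Fin N)) :
    ehatMinus μ l (fun z' => c * ∑ i, F i z') x = c * ∑ i, ehatMinus μ l (F i) x := by
  simp only [ehatMinus]
  rw [eMinusAux_sum F hF c x l]
  simp only [Finset.mul_sum]
  exact Finset.sum_congr rfl fun j _ => by ring

lemma bMinus_sum {ι : Type} [Fintype ι] (F : ι → Fn N) (hF : ∀ i, Continuous (F i)) (c : ℂ)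
    (x : Pt (N + 1)) :
    bMinus γ μ (fun z' => c * ∑ i, F i z') x = c * ∑ i, bMinus γ μ (F i) x := by
  simp only [bMinus]
  have key : ∀ n : ℕ, (γ : ℂ) ^ n *
        ∑ e : Fin n ↪ Fin N, ehatMinus μ (List.ofFn ⇑e) (fun z' => c * ∑ i, F i z') x
      = c * ∑ i, (γ : ℂ) ^ n * ∑ e : Fin n ↪ Fin N, ehatMinus μ (List.ofFn ⇑e) (F i) x := by
    intro n
    rw [show (fun z' => c * ∑ i, F i z') = fun z' => c * ∑ i, F i z' from rfl]
    simp only [fun (e : Fin n ↪ Fin N) => ehatMinus_sum (μ := μ) F hF c x (List.ofFn ⇑e)]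
    simp only [Finset.mul_sum]
    rw [Finset.sum_comm]
    exact Finset.sum_congr rfl fun i _ => Finset.sum_congr rfl fun e _ => by ring
  simp only [key]
  rw [← Finset.mul_sum]
  congr 1
  rw [Finset.sum_comm]

/-- The auxiliary "next value" entering `ePlusAux`. -/
def nextVal {N : ℕ} (x : Pt (N + 1)) : List (Fin N) → ℝ
  | [] => x 0
  | j :: _ => x j.succ

lemma ePlusAux_cons (f : Fn N) (x : Pt (N + 1)) (i : Fin N) (rest : List (Fin N)) (z : Pt N) :
    ePlusAux μ f x (i :: rest) z
      = ∫ y in (nextVal x rest)..(x i.succ),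
          Complex.exp (Complex.I * μ * ((x i.succ - y : ℝ) : ℂ)) *
            ePlusAux μ f x rest (Function.update z i y) := by
  cases rest <;> rfl

/-- The chain of compatibilities between `w = x ∘ σ_l` and `x` along a list. -/
def ChainHyp {N : ℕ} (x w : Pt (N + 1)) : List (Fin N) → Prop
  | [] => True
  | i :: rest => w i.castSucc = nextVal x rest ∧ ChainHyp x w rest

lemma plusMinus (f : Fn N) (x w : Pt (N + 1)) :
    ∀ (l : List (Fin N)) (ub : ℝ) (z₁ z₂ : Pt N),
    (∀ j, j ∉ l → z₁ j = z₂ j) → ChainHyp x w l →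
    (∀ i rest, l = i :: rest → ub = x i.succ) →
    Complex.exp (Complex.I * μ * (((l.map fun i => x i.succ).sum : ℝ) : ℂ)) *
        eMinusAux μ f w l ub z₁
      = Complex.exp (Complex.I * μ * (((l.map fun i => w i.castSucc).sum : ℝ) : ℂ)) *
        ePlusAux μ f x l z₂
  | [], ub, z₁, z₂, hz, _, _ => by
    have hz' : z₁ = z₂ := funext fun j => hz j List.not_mem_nil
    simp [eMinusAux, ePlusAux, hz']
  | i :: rest, ub, z₁, z₂, hz, hch, hub => by
    obtain ⟨hw, hch'⟩ := hch
    rw [hub i rest rfl, ePlusAux_cons]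
    simp only [eMinusAux, List.map_cons, List.sum_cons]
    rw [← hw]
    rw [← intervalIntegral.integral_const_mul, ← intervalIntegral.integral_const_mul]
    apply intervalIntegral.integral_congr
    intro y _
    have key := plusMinus f x w rest (w i.castSucc) (Function.update z₁ i y)
      (Function.update z₂ i y)
      (fun j hj => by
        rcases eq_or_ne j i with rfl | hne
        · simp
        · rw [Function.update_of_ne hne, Function.update_of_ne hne]
          exact hz j (fun hmem => hj (by
            rcases List.mem_cons.mp hmem with h | h
            · exact absurd h hne
            · exact h)))
      hch' (fun j t ht => by subst ht; exact hw)
    have hsplit : ∀ a b : ℝ, Complex.exp (Complex.I * μ * ((a + b : ℝ) : ℂ))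
        = Complex.exp (Complex.I * μ * ((a : ℝ) : ℂ)) *
          Complex.exp (Complex.I * μ * ((b : ℝ) : ℂ)) := by
      intro a b; rw [← Complex.exp_add]; congr 1; push_cast; ring
    have hsplit' : ∀ a b : ℝ, Complex.exp (Complex.I * μ * ((a - b : ℝ) : ℂ))
        = Complex.exp (Complex.I * μ * ((a : ℝ) : ℂ)) *
          Complex.exp (Complex.I * μ * ((-b : ℝ) : ℂ)) := by
      intro a b; rw [← Complex.exp_add]; congr 1; push_cast; ring
    simp only [hsplit, hsplit']
    linear_combination (Complex.exp (Complex.I * μ * ((x i.succ : ℝ) : ℂ)) *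
      Complex.exp (Complex.I * μ * ((w i.castSucc : ℝ) : ℂ)) *
      Complex.exp (Complex.I * μ * ((-y : ℝ) : ℂ))) * key

/-- The cyclic permutation relating `ê⁺` and `ê⁻`. -/
def sigmaOf {N : ℕ} (l : List (Fin N)) : Equiv.Perm (Fin (N + 1)) :=
  (List.formPerm (Fin.last N :: l.map Fin.castSucc)).trans (finRotate (N + 1))

lemma nodup_cons_list (l : List (Fin N)) (hl : l.Nodup) :
    (Fin.last N :: l.map Fin.castSucc).Nodup := by
  refine List.nodup_cons.mpr ⟨?_, hl.map (Fin.castSucc_injective N)⟩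
  intro h
  obtain ⟨i, _, hi⟩ := List.mem_map.mp h
  exact absurd hi (Fin.castSucc_lt_last i).ne

lemma sigmaOf_not_mem (l : List (Fin N)) (j : Fin N) (hj : j ∉ l) :
    sigmaOf l j.castSucc = j.succ := by
  have hmem : j.castSucc ∉ (Fin.last N :: l.map Fin.castSucc) := by
    intro h
    rcases List.mem_cons.mp h with h | h
    · exact absurd h (Fin.castSucc_lt_last j).ne
    · obtain ⟨i, hi, hii⟩ := List.mem_map.mp h
      rw [← Fin.castSucc_injective N hii] at hj
      exact hj hi
  simp only [sigmaOf, Equiv.trans_apply, List.formPerm_apply_of_notMem hmem,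
    finRotate_succ_apply, Fin.coeSucc_eq_succ]

lemma sigmaOf_last (l : List (Fin N)) (hl : l.Nodup) :
    sigmaOf l (Fin.last N) = (match l with | [] => (0 : Fin (N + 1)) | i :: _ => i.succ) := by
  cases l with
  | nil =>
    simp only [sigmaOf, List.map_nil, List.formPerm_singleton, Equiv.trans_apply,
      Equiv.Perm.coe_one, id_eq, finRotate_last]
  | cons i rest =>
    have h := List.formPerm_apply_head (Fin.last N) i.castSucc (rest.map Fin.castSucc)
      (by simpa using nodup_cons_list (i :: rest) hl)
    simp only [sigmaOf, List.map_cons, Equiv.trans_apply, h,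
      finRotate_succ_apply, Fin.coeSucc_eq_succ]

lemma sigmaOf_get (l : List (Fin N)) (hl : l.Nodup) (k : ℕ) (hk : k < l.length) :
    sigmaOf l ((l.get ⟨k, hk⟩).castSucc)
      = if hk' : k + 1 < l.length then (l.get ⟨k + 1, hk'⟩).succ else 0 := by
  have hL : (Fin.last N :: l.map Fin.castSucc).Nodup := nodup_cons_list l hl
  have hlen : (Fin.last N :: l.map Fin.castSucc).length = l.length + 1 := by simp
  have hk1 : k + 1 < (Fin.last N :: l.map Fin.castSucc).length := by omega
  have hgl : (Fin.last N :: l.map Fin.castSucc)[k + 1]'hk1 = (l.get ⟨k, hk⟩).castSucc := by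
    simp [List.getElem_cons_succ]
  have hfp := List.formPerm_apply_getElem _ hL (k + 1) hk1
  rw [hgl] at hfp
  simp only [sigmaOf, Equiv.trans_apply, hfp]
  by_cases hk' : k + 1 < l.length
  · have hmod : (k + 1 + 1) % (Fin.last N :: l.map Fin.castSucc).length = k + 2 := by
      rw [hlen]; exact Nat.mod_eq_of_lt (by omega)
    rw [dif_pos hk', getElem_congr_idx hmod]
    have hg2 : (Fin.last N :: l.map Fin.castSucc)[k + 2]'(by rw [hlen]; omega)
        = (l.get ⟨k + 1, hk'⟩).castSucc := by
      simp [List.getElem_cons_succ]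
    rw [hg2, finRotate_succ_apply, Fin.coeSucc_eq_succ]
  · have hmod : (k + 1 + 1) % (Fin.last N :: l.map Fin.castSucc).length = 0 := by
      rw [hlen]
      have hkl : k + 1 + 1 = l.length + 1 := by omega
      rw [hkl, Nat.mod_self]
    rw [dif_neg hk', getElem_congr_idx hmod]
    have hg2 : (Fin.last N :: l.map Fin.castSucc)[0]'(by rw [hlen]; omega) = Fin.last N := rfl
    rw [hg2, finRotate_last]

lemma chainHyp_of (x w : Pt (N + 1)) : ∀ (l : List (Fin N)),
    (∀ (k : ℕ) (hk : k < l.length), w ((l.get ⟨k, hk⟩).castSucc)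
      = if hk' : k + 1 < l.length then x ((l.get ⟨k + 1, hk'⟩).succ) else x 0) →
    ChainHyp x w l
  | [], _ => trivial
  | i :: rest, h => by
    constructor
    · have h0 := h 0 (Nat.succ_pos _)
      cases rest with
      | nil => simpa [nextVal] using h0
      | cons j t => simpa [nextVal] using h0
    · apply chainHyp_of x w rest
      intro k hk
      have hh := h (k + 1) (by simpa using Nat.succ_lt_succ hk)
      simpa [Nat.succ_lt_succ_iff] using hh

lemma chainHyp_sigmaOf (x : Pt (N + 1)) (l : List (Fin N)) (hl : l.Nodup) :
    ChainHyp x (x ∘ ⇑(sigmaOf l)) l := by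
  apply chainHyp_of
  intro k hk
  show x (sigmaOf l ((l.get ⟨k, hk⟩).castSucc)) = _
  rw [sigmaOf_get l hl k hk]
  exact apply_dite x _ _ _

lemma chain_cons (x w : Pt (N + 1)) : ∀ (l : List (Fin N)) (a : ℝ),
    ChainHyp x w l → a = nextVal x l →
    a :: l.map (fun i => w i.castSucc) = l.map (fun i => x i.succ) ++ [x 0]
  | [], a, _, ha => by simp [ha, nextVal]
  | i :: rest, a, h, ha => by
    obtain ⟨h1, h2⟩ := h
    simp only [List.map_cons, List.cons_append]
    rw [ha]
    show x i.succ :: (w i.castSucc :: rest.map fun i => w i.castSucc) = _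
    rw [chain_cons x w rest (w i.castSucc) h2 h1]

lemma ehatPlus_eq (f : Fn N) (l : List (Fin N)) (hl : l.Nodup) (x : Pt (N + 1)) :
    ehatPlus μ l f x = ehatMinus μ l f (x ∘ ⇑(sigmaOf l)) := by
  set w : Pt (N + 1) := x ∘ ⇑(sigmaOf l) with hwdef
  have hch : ChainHyp x w l := chainHyp_sigmaOf x l hl
  have hlast : w (Fin.last N) = nextVal x l := by
    show x (sigmaOf l (Fin.last N)) = _
    rw [sigmaOf_last l hl]
    cases l <;> rfl
  have hchain : w (Fin.last N) :: l.map (fun i => w i.castSucc)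
      = l.map (fun i => x i.succ) ++ [x 0] :=
    chain_cons x w l (w (Fin.last N)) hch hlast
  have hz : ∀ j, j ∉ l → (fun j => w j.castSucc) j = (fun j => x j.succ) j := by
    intro j hj
    show x (sigmaOf l j.castSucc) = x j.succ
    rw [sigmaOf_not_mem l j hj]
  have hub : ∀ i rest, l = i :: rest → w (Fin.last N) = x i.succ := by
    intro i rest ht; subst ht; exact hlast
  have key := plusMinus (μ := μ) f x w l (w (Fin.last N)) (fun j => w j.castSucc)
    (fun j => x j.succ) hz hch hub
  have hsum : (l.map fun i => x i.succ).sum + x 0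
      = w (Fin.last N) + (l.map fun i => w i.castSucc).sum := by
    have := congrArg List.sum hchain
    simp only [List.sum_cons, List.sum_append, List.sum_cons, List.sum_nil] at this
    linarith [this]
  simp only [ehatPlus, ehatMinus]
  rw [hchain]
  apply mul_left_cancel₀ (a := Complex.exp (Complex.I * μ *
    (((l.map fun i => x i.succ).sum : ℝ) : ℂ))) (Complex.exp_ne_zero _)
  have h2 : Complex.exp (Complex.I * μ * ((x 0 : ℝ) : ℂ)) *
        Complex.exp (Complex.I * μ * (((l.map fun i => x i.succ).sum : ℝ) : ℂ))
      = Complex.exp (Complex.I * μ * ((w (Fin.last N) : ℝ) : ℂ)) *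
        Complex.exp (Complex.I * μ * (((l.map fun i => w i.castSucc).sum : ℝ) : ℂ)) := by
    rw [← Complex.exp_add, ← Complex.exp_add]
    congr 1
    have hc := congrArg (fun t : ℝ => (t : ℂ)) hsum
    push_cast at hc ⊢
    linear_combination (Complex.I * μ) * hc
  linear_combination (chainInd (l.map (fun i => x i.succ) ++ [x 0]) *
      ePlusAux μ f x l fun j => x j.succ) * h2
    - (chainInd (l.map (fun i => x i.succ) ++ [x 0]) *
      Complex.exp (Complex.I * μ * ((w (Fin.last N) : ℝ) : ℂ))) * key

lemma permPt_inv (w : Equiv.Perm (Fin N)) (x : Pt N) : permPt w⁻¹ x = x ∘ ⇑w := by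
  funext j; simp [permPt]

lemma symN_apply (M : ℕ) (g : Fn M) (x : Pt M) :
    symN M g x = ((M.factorial : ℂ))⁻¹ * ∑ w : Equiv.Perm (Fin M), g (x ∘ ⇑w) := by
  have h : ∀ w : Equiv.Perm (Fin M), g (permPt w⁻¹ x) = g (x ∘ ⇑w) :=
    fun w => by rw [permPt_inv]
  simp only [symN, h]

lemma sum_perm_comp (M : ℕ) (g : Fn M) (σ : Equiv.Perm (Fin M)) (x : Pt M) :
    ∑ w : Equiv.Perm (Fin M), g (x ∘ ⇑(w * σ)) = ∑ w : Equiv.Perm (Fin M), g (x ∘ ⇑w) :=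
  Fintype.sum_equiv (Equiv.mulRight σ) _ _ fun _ => rfl

lemma sum_ehatPlus (f : Fn N) (l : List (Fin N)) (hl : l.Nodup) (x : Pt (N + 1)) :
    ∑ w : Equiv.Perm (Fin (N + 1)), ehatPlus μ l f (x ∘ ⇑w)
      = ∑ w : Equiv.Perm (Fin (N + 1)), ehatMinus μ l f (x ∘ ⇑w) := by
  have h : ∀ w : Equiv.Perm (Fin (N + 1)),
      ehatPlus μ l f (x ∘ ⇑w) = ehatMinus μ l f (x ∘ ⇑(w * sigmaOf l)) := by
    intro w
    rw [ehatPlus_eq f l hl (x ∘ ⇑w)]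
    congr 1
  simp only [h]
  exact sum_perm_comp (N + 1) (ehatMinus μ l f) (sigmaOf l) x

set_option maxHeartbeats 1000000 in
lemma symN_bPlus (f : Fn N) (x : Pt (N + 1)) :
    symN (N + 1) (bPlus γ μ f) x = symN (N + 1) (bMinus γ μ f) x := by
  rw [symN_apply, symN_apply]
  congr 1
  simp only [bPlus, bMinus]
  rw [Finset.sum_comm (s := (Finset.univ : Finset (Equiv.Perm (Fin (N + 1)))))
    (t := Finset.range (N + 1))]
  conv_rhs => rw [Finset.sum_comm (s := (Finset.univ : Finset (Equiv.Perm (Fin (N + 1)))))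
    (t := Finset.range (N + 1))]
  refine Finset.sum_congr rfl fun n _ => ?_
  rw [← Finset.mul_sum, ← Finset.mul_sum]
  congr 1
  rw [Finset.sum_comm (s := (Finset.univ : Finset (Equiv.Perm (Fin (N + 1)))))]
  conv_rhs => rw [Finset.sum_comm (s := (Finset.univ : Finset (Equiv.Perm (Fin (N + 1)))))]
  refine Finset.sum_congr rfl fun e _ => ?_
  exact sum_ehatPlus f (List.ofFn ⇑e) (List.nodup_ofFn.mpr e.injective) x

set_option maxHeartbeats 1600000 in
lemma symN_bMinus_symN (f : Fn N) (hf : Continuous f) (x : Pt (N + 1)) :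
    symN (N + 1) (bMinus γ μ (symN N f)) x = symN (N + 1) (bMinus γ μ f) x := by
  have hrep : symN N f
      = fun z => ((N.factorial : ℂ))⁻¹ * ∑ w : Equiv.Perm (Fin N), f (z ∘ ⇑w) := by
    funext z; rw [symN_apply]
  have hb : ∀ y : Pt (N + 1), bMinus γ μ (symN N f) y
      = ((N.factorial : ℂ))⁻¹ * ∑ w : Equiv.Perm (Fin N), bMinus γ μ f (y ∘ ⇑(liftP w)) := by
    intro y
    rw [hrep, bMinus_sum (fun w : Equiv.Perm (Fin N) => fun z => f (z ∘ ⇑w))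
      (fun w => hf.comp (continuous_pi fun j => continuous_apply (w j))) _ y]
    congr 1
    exact Finset.sum_congr rfl fun w _ => bMinus_comp w f y
  rw [symN_apply, symN_apply]
  congr 1
  have step1 : ∑ σ : Equiv.Perm (Fin (N + 1)), bMinus γ μ (symN N f) (x ∘ ⇑σ)
      = ((N.factorial : ℂ))⁻¹ * ∑ σ : Equiv.Perm (Fin (N + 1)),
          ∑ w : Equiv.Perm (Fin N), bMinus γ μ f (x ∘ ⇑(σ * liftP w)) := by
    simp only [hb]
    rw [← Finset.mul_sum]
    congr 1
  rw [step1, Finset.sum_comm (s := (Finset.univ : Finset (Equiv.Perm (Fin (N + 1)))))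
    (t := (Finset.univ : Finset (Equiv.Perm (Fin N))))]
  have step2 : ∀ w : Equiv.Perm (Fin N),
      ∑ σ : Equiv.Perm (Fin (N + 1)), bMinus γ μ f (x ∘ ⇑(σ * liftP w))
        = ∑ σ : Equiv.Perm (Fin (N + 1)), bMinus γ μ f (x ∘ ⇑σ) :=
    fun w => sum_perm_comp (N + 1) (bMinus γ μ f) (liftP w) x
  simp only [step2]
  rw [Finset.sum_const, Finset.card_univ, Fintype.card_perm, Fintype.card_fin,
    nsmul_eq_mul, ← mul_assoc, inv_mul_cancel₀
      (Nat.cast_ne_zero.mpr (Nat.factorial_ne_zero N)), one_mul]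

end AuxLemmas

/-- symmetrization intertwines the non-symmetric creation operators with
the QISM creation operator: for `f ∈ CB^∞(ℝ^N)` and both signs `ε`,
`𝒮_{N+1}(b^ε_μ f) = 𝒮_{N+1}(b⁻_μ (𝒮_N f)) = B_μ (𝒮_N f)`; in particular
`𝒮_{N+1}(b⁺_μ f) = 𝒮_{N+1}(b⁻_μ f)`. -/
theorem statement_19 (N : ℕ) (hN : 1 ≤ N) (γ : ℝ) (μ : ℂ)
    (f : Fn N) (hf : CBsmooth f) :
    (∀ (ε : Bool) (x : Pt (N + 1)),
      symN (N + 1) (bEps ε γ μ f) x = symN (N + 1) (bMinus γ μ (symN N f)) x) ∧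
    (∀ x : Pt (N + 1), symN (N + 1) (bPlus γ μ f) x = symN (N + 1) (bMinus γ μ f) x) := by
  have hfc : Continuous f := hf.1
  refine ⟨?_, fun x => symN_bPlus f x⟩
  intro ε x
  rw [symN_bMinus_symN f hfc x]
  cases ε
  · rfl
  · show symN (N + 1) (bPlus γ μ f) x = _
    exact symN_bPlus f x

end
end
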